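/- arXiv:1111.2945 — 3 statements merged into one kernel-verified Lean document; each statement's English description precedes it below -/
import Mathlib

section
/- Let n ≥ 2 and let π ∈ B_n be the product of some subsequence of the word (s_0, s_1, …, s_{n−2}, s_{n−1}, s_{n−2}, …, s_1, s_0), and let w be any reduced expression of π that is a subsequence of this word. Then: (a) for 1 ≤ i ≤ n−1, s_i occurs 0 times in w if and only if π({i+1,…,n}) = {i+1,…,n}, and s_i occurs exactly 2 times in w if and only if π(i+1) = i+1 and π({i+1,…,n}) ≠ {i+1,…,n}; if s_i occurs exactly once then i+1 is a top excedance of π or of π^{-1}; (b) s_0 occurs 0 times in w if and only if the window notation of π has no negative entry, s_0 occurs exactly 2 times if and only if it has exactly two negative entries, and s_0 occurs exactly once if and only if it has exactly one negative entry, in which case that entry is −1 or lies in the first position. -/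
/-- The Coxeter generators of the hyperoctahedral group `B_n`, realized as permutations
of `ℤ`: `s_0` exchanges `1` and `-1`; for `1 ≤ i ≤ n-1`, `s_i` exchanges `i` with `i+1`
and `-i` with `-(i+1)`. -/
def genB (n : ℕ) (i : Fin n) : Equiv.Perm ℤ :=
  if i.val = 0 then Equiv.swap 1 (-1)
  else Equiv.swap (i.val : ℤ) ((i.val : ℤ) + 1) * Equiv.swap (-(i.val : ℤ)) (-((i.val : ℤ) + 1))

/-- The product of a word in the generators of `B_n`. -/
def wordProdB (n : ℕ) (w : List (Fin n)) : Equiv.Perm ℤ :=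
  (w.map (genB n)).prod

/-- A word in the generators is reduced if no shorter word has the same product. -/
def ReducedB (n : ℕ) (w : List (Fin n)) : Prop :=
  ∀ w' : List (Fin n), wordProdB n w' = wordProdB n w → w.length ≤ w'.length

/-- A reflection of `B_n`: a conjugate (by an element of the group) of a generator. -/
def IsReflectionB (n : ℕ) (t : Equiv.Perm ℤ) : Prop :=
  ∃ (v : List (Fin n)) (g : Fin n), t = wordProdB n v * genB n g * (wordProdB n v)⁻¹

/-- A boolean reflection of `B_n`: a reflection admitting a reduced expression of the form
`s_{j_1} ⋯ s_{j_{k-1}} s_{j_k} s_{j_{k-1}} ⋯ s_{j_1}` with `j_1, …, j_k` pairwise distinct. -/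
def IsBooleanReflectionB (n : ℕ) (t : Equiv.Perm ℤ) : Prop :=
  IsReflectionB n t ∧
    ∃ (l : List (Fin n)) (c : Fin n), (l ++ [c]).Nodup ∧
      ReducedB n (l ++ [c] ++ l.reverse) ∧ wordProdB n (l ++ [c] ++ l.reverse) = t

section Helpers

variable {n : ℕ}

lemma genB_one (j : Fin n) (hj : j.val ≠ 0) (x : ℤ) :
    genB n j x = if x = (j.val:ℤ) then (j.val:ℤ)+1 else if x = (j.val:ℤ)+1 then (j.val:ℤ)
      else if x = -(j.val:ℤ) then -((j.val:ℤ)+1) else if x = -((j.val:ℤ)+1) then -(j.val:ℤ) else x := by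
  have hj1 : 1 ≤ (j.val:ℤ) := by exact_mod_cast Nat.one_le_iff_ne_zero.mpr hj
  simp only [genB, if_neg hj, Equiv.Perm.mul_apply, Equiv.swap_apply_def]
  try (split_ifs <;> omega)

lemma genB_zeroth (j : Fin n) (hj : j.val = 0) (x : ℤ) :
    genB n j x = if x = 1 then -1 else if x = -1 then 1 else x := by
  simp only [genB, if_pos hj, Equiv.swap_apply_def]
  try (split_ifs <;> omega)

lemma genB_neg (j : Fin n) (x : ℤ) : genB n j (-x) = - genB n j x := by
  by_cases hj : j.val = 0
  · rw [genB_zeroth j hj, genB_zeroth j hj]; try (split_ifs <;> omega)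
  · rw [genB_one j hj, genB_one j hj]
    have hj1 : 1 ≤ (j.val:ℤ) := by exact_mod_cast Nat.one_le_iff_ne_zero.mpr hj
    try (split_ifs <;> omega)

lemma wordProdB_nil : wordProdB n [] = 1 := rfl

lemma wordProdB_cons (a : Fin n) (l : List (Fin n)) :
    wordProdB n (a :: l) = genB n a * wordProdB n l := by simp [wordProdB]

lemma wordProdB_append (l₁ l₂ : List (Fin n)) :
    wordProdB n (l₁ ++ l₂) = wordProdB n l₁ * wordProdB n l₂ := by simp [wordProdB]

lemma wordProdB_fix (l : List (Fin n)) (x : ℤ) (h : ∀ j ∈ l, genB n j x = x) :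
    wordProdB n l x = x := by
  induction l with
  | nil => rfl
  | cons a l ih =>
      rw [wordProdB_cons, Equiv.Perm.mul_apply, ih (fun j hj => h j (List.mem_cons_of_mem a hj)),
        h a (List.mem_cons_self)]

lemma wordProdB_pres (P : ℤ → Prop) (l : List (Fin n))
    (h : ∀ j ∈ l, ∀ x, P x → P (genB n j x)) : ∀ x, P x → P (wordProdB n l x) := by
  induction l with
  | nil => intro x hx; exact hx
  | cons a l ih =>
      intro x hx
      rw [wordProdB_cons, Equiv.Perm.mul_apply]
      exact h a (List.mem_cons_self) _ (ih (fun j hj => h j (List.mem_cons_of_mem a hj)) x hx)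

lemma wordProdB_iff (P : ℤ → Prop) (l : List (Fin n))
    (h : ∀ j ∈ l, ∀ x, P (genB n j x) ↔ P x) : ∀ x, P (wordProdB n l x) ↔ P x := by
  induction l with
  | nil => intro x; rfl
  | cons a l ih =>
      intro x
      rw [wordProdB_cons, Equiv.Perm.mul_apply,
        h a (List.mem_cons_self), ih (fun j hj => h j (List.mem_cons_of_mem a hj))]

lemma wordProdB_neg (l : List (Fin n)) (x : ℤ) :
    wordProdB n l (-x) = -(wordProdB n l x) := by
  induction l with
  | nil => rfl
  | cons a l ih => rw [wordProdB_cons, Equiv.Perm.mul_apply, Equiv.Perm.mul_apply, ih, genB_neg]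

-- per-letter consequences
lemma genB_fix_of_big (j : Fin n) (x : ℤ) (h : (j.val:ℤ) + 1 < x) : genB n j x = x := by
  by_cases hj : j.val = 0
  · rw [genB_zeroth j hj]; rw [hj] at h; push_cast at h; try (split_ifs <;> omega)
  · rw [genB_one j hj]
    have hj1 : 1 ≤ (j.val:ℤ) := by exact_mod_cast Nat.one_le_iff_ne_zero.mpr hj
    try (split_ifs <;> omega)

lemma genB_fix_of_small (j : Fin n) (x : ℤ) (h0 : j.val ≠ 0) (h : -(j.val:ℤ) < x)
    (h' : x < (j.val:ℤ)) : genB n j x = x := by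
  rw [genB_one j h0]
  have hj1 : 1 ≤ (j.val:ℤ) := by exact_mod_cast Nat.one_le_iff_ne_zero.mpr h0
  try (split_ifs <;> omega)

lemma genB_fix_of_ne (j : Fin n) (x : ℤ) (h0 : j.val ≠ 0) (h1 : x ≠ (j.val:ℤ))
    (h2 : x ≠ (j.val:ℤ)+1) (h3 : x ≠ -(j.val:ℤ)) (h4 : x ≠ -((j.val:ℤ)+1)) :
    genB n j x = x := by
  rw [genB_one j h0]; try (split_ifs <;> omega)

lemma genB_ge (j : Fin n) (m x : ℤ) (hm : 2 ≤ m) (hj : (j.val:ℤ) ≠ m - 1) (hx : m ≤ x) :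
    m ≤ genB n j x := by
  by_cases h0 : j.val = 0
  · rw [genB_zeroth j h0]; try (split_ifs <;> omega)
  · rw [genB_one j h0]
    have hj1 : 1 ≤ (j.val:ℤ) := by exact_mod_cast Nat.one_le_iff_ne_zero.mpr h0
    try (split_ifs <;> omega)

lemma genB_le (j : Fin n) (x : ℤ) (hx : x ≤ (n:ℤ)) : genB n j x ≤ (n:ℤ) := by
  have hjn : (j.val:ℤ) + 1 ≤ (n:ℤ) := by exact_mod_cast j.isLt
  by_cases h0 : j.val = 0
  · rw [genB_zeroth j h0]; try (split_ifs <;> omega)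
  · rw [genB_one j h0]; try (split_ifs <;> omega)

lemma genB_abs_le (j : Fin n) (x c : ℤ) (hc : 1 ≤ c) (hj : (j.val:ℤ) ≠ c)
    (h1 : -c ≤ x) (h2 : x ≤ c) : -c ≤ genB n j x ∧ genB n j x ≤ c := by
  by_cases h0 : j.val = 0
  · rw [genB_zeroth j h0]; try (split_ifs <;> omega)
  · rw [genB_one j h0]
    have hj1 : 1 ≤ (j.val:ℤ) := by exact_mod_cast Nat.one_le_iff_ne_zero.mpr h0
    by_cases hcj : (j.val:ℤ) ≤ c
    · split_ifs <;> omega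
    · split_ifs <;> omega

lemma genB_pos_range (j : Fin n) (hj : j.val ≠ 0) (x : ℤ) :
    (1 ≤ genB n j x ∧ genB n j x ≤ (n:ℤ)) ↔ (1 ≤ x ∧ x ≤ (n:ℤ)) := by
  have hjn : (j.val:ℤ) + 1 ≤ (n:ℤ) := by exact_mod_cast j.isLt
  have hj1 : 1 ≤ (j.val:ℤ) := by exact_mod_cast Nat.one_le_iff_ne_zero.mpr hj
  rw [genB_one j hj]; try (split_ifs <;> omega)

lemma genB_hi_range (j : Fin n) (m x : ℤ) (hm : 2 ≤ m) (hj : m ≤ (j.val:ℤ)) :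
    (m ≤ genB n j x ∧ genB n j x ≤ (n:ℤ)) ↔ (m ≤ x ∧ x ≤ (n:ℤ)) := by
  have hjn : (j.val:ℤ) + 1 ≤ (n:ℤ) := by exact_mod_cast j.isLt
  have h0 : j.val ≠ 0 := by omega
  rw [genB_one j h0]; try (split_ifs <;> omega)

lemma sorted_split {α : Type} {r : α → α → Prop} {l : List α} {g : α}
    (hs : l.Pairwise r) (hm : g ∈ l) :
    ∃ l₁ l₂, l = l₁ ++ g :: l₂ ∧ (∀ x ∈ l₁, r x g) ∧ (∀ x ∈ l₂, r g x) := by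
  obtain ⟨l₁, l₂, rfl⟩ := List.append_of_mem hm
  rw [List.pairwise_append] at hs
  obtain ⟨h1, h2, h3⟩ := hs
  rw [List.pairwise_cons] at h2
  exact ⟨l₁, l₂, rfl, fun x hx => h3 x hx g (List.mem_cons_self), h2.1⟩

lemma conj_cancel_pos (g : Fin n) (hg : g.val ≠ 0) (R : List (Fin n))
    (hR : ∀ j ∈ R, (g.val:ℤ) + 1 ≤ (j.val:ℤ))
    (hfix : wordProdB n R ((g.val:ℤ)+1) = (g.val:ℤ)+1) :
    genB n g * wordProdB n R * genB n g = wordProdB n R := by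
  have hi : 1 ≤ (g.val:ℤ) := by
    have : 1 ≤ g.val := Nat.one_le_iff_ne_zero.mpr hg
    exact_mod_cast this
  set i := (g.val:ℤ) with hidef
  have hfi : ∀ j ∈ R, genB n j i = i := by
    intro j hj
    have := hR j hj
    exact genB_fix_of_small j i (by omega) (by omega) (by omega)
  have hfni : ∀ j ∈ R, genB n j (-i) = -i := by
    intro j hj
    have := hR j hj
    exact genB_fix_of_small j (-i) (by omega) (by omega) (by omega)
  have Ri : wordProdB n R i = i := wordProdB_fix _ _ hfi
  have Rni : wordProdB n R (-i) = -i := wordProdB_fix _ _ hfni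
  have Rnm : wordProdB n R (-(i+1)) = -(i+1) := by rw [wordProdB_neg, hfix]
  have gvi : genB n g i = i+1 := by rw [genB_one g hg]; split_ifs <;> omega
  have gvm : genB n g (i+1) = i := by rw [genB_one g hg]; split_ifs <;> omega
  have gvni : genB n g (-i) = -(i+1) := by rw [genB_one g hg]; split_ifs <;> omega
  have gvnm : genB n g (-(i+1)) = -i := by rw [genB_one g hg]; split_ifs <;> omega
  apply Equiv.ext
  intro x
  simp only [Equiv.Perm.mul_apply]
  by_cases h1 : x = i
  · subst h1; rw [gvi, hfix, gvm, Ri]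
  by_cases h2 : x = i+1
  · subst h2; rw [gvm, Ri, gvi, hfix]
  by_cases h3 : x = -i
  · subst h3; rw [gvni, Rnm, gvnm, Rni]
  by_cases h4 : x = -(i+1)
  · subst h4; rw [gvnm, Rni, gvni, Rnm]
  have hgx : genB n g x = x := genB_fix_of_ne g x hg h1 h2 h3 h4
  rw [hgx]
  have hinj := (wordProdB n R).injective
  refine genB_fix_of_ne g _ hg ?_ ?_ ?_ ?_
  · intro h; exact h1 (hinj (h.trans Ri.symm))
  · intro h; exact h2 (hinj (h.trans hfix.symm))
  · intro h; exact h3 (hinj (h.trans Rni.symm))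
  · intro h; exact h4 (hinj (h.trans Rnm.symm))

lemma conj_cancel_zero (g : Fin n) (hg : g.val = 0) (R : List (Fin n))
    (hR : ∀ j ∈ R, j.val ≠ 0)
    (hfix : wordProdB n R 1 = 1) :
    genB n g * wordProdB n R * genB n g = wordProdB n R := by
  have Rn1 : wordProdB n R (-1) = -1 := by
    have := wordProdB_neg R 1; rw [hfix] at this; exact this
  have gv1 : genB n g 1 = -1 := by rw [genB_zeroth g hg]; norm_num
  have gvn1 : genB n g (-1) = 1 := by rw [genB_zeroth g hg]; norm_num
  apply Equiv.ext
  intro x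
  simp only [Equiv.Perm.mul_apply]
  by_cases h1 : x = 1
  · subst h1; rw [gv1, Rn1, gvn1, hfix]
  by_cases h2 : x = -1
  · subst h2; rw [gvn1, hfix, gv1, Rn1]
  have hgx : genB n g x = x := by rw [genB_zeroth g hg]; split_ifs <;> omega
  rw [hgx]
  have hinj := (wordProdB n R).injective
  rw [genB_zeroth g hg]
  have hx1 : wordProdB n R x ≠ 1 := fun h => h1 (hinj (h.trans hfix.symm))
  have hx2 : wordProdB n R x ≠ -1 := fun h => h2 (hinj (h.trans Rn1.symm))
  split_ifs <;> omega

lemma val_ne_of_ne {j g : Fin n} (h : j ≠ g) : (j.val:ℤ) ≠ (g.val:ℤ) :=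
  fun hc => h (Fin.ext (by exact_mod_cast hc))

lemma image_eq_iff (π : Equiv.Perm ℤ) (s : Finset ℤ) :
    (s.image (fun j => π j) = s) ↔ ∀ x ∈ s, π x ∈ s := by
  constructor
  · intro h x hx; rw [← h]; exact Finset.mem_image_of_mem _ hx
  · intro h
    apply Finset.eq_of_subset_of_card_le
    · intro y hy
      obtain ⟨x, hx, rfl⟩ := Finset.mem_image.mp hy
      exact h x hx
    · rw [Finset.card_image_of_injective _ π.injective]


lemma partA (hn : 2 ≤ n) (u v : List (Fin n))
    (hred : ReducedB n (u ++ v))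
    (hu_sorted : u.Pairwise (· < ·)) (hv_sorted : v.Pairwise (· > ·))
    (hu_nd : u.Nodup) (hv_nd : v.Nodup)
    (g : Fin n) (hg : 1 ≤ g.val) :
    (((u ++ v).count g = 0 ↔
        (Finset.Icc ((g.val : ℤ) + 1) (n : ℤ)).image (fun j => wordProdB n (u ++ v) j) =
          Finset.Icc ((g.val : ℤ) + 1) (n : ℤ)) ∧
     ((u ++ v).count g = 2 ↔
        (wordProdB n (u ++ v) ((g.val : ℤ) + 1) = (g.val : ℤ) + 1 ∧
          (Finset.Icc ((g.val : ℤ) + 1) (n : ℤ)).image (fun j => wordProdB n (u ++ v) j) ≠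
            Finset.Icc ((g.val : ℤ) + 1) (n : ℤ))) ∧
     ((u ++ v).count g = 1 →
        ((wordProdB n (u ++ v)).symm ((g.val : ℤ) + 1) < (g.val : ℤ) + 1 ∨
          wordProdB n (u ++ v) ((g.val : ℤ) + 1) < (g.val : ℤ) + 1))) := by
  have hgv0 : g.val ≠ 0 := by omega
  have hi : 1 ≤ (g.val:ℤ) := by exact_mod_cast hg
  have hmn : (g.val:ℤ) + 1 ≤ (n:ℤ) := by exact_mod_cast g.isLt
  have hgm : genB n g ((g.val:ℤ)+1) = (g.val:ℤ) := by
    rw [genB_one g hgv0]; split_ifs <;> omega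
  have hgi : genB n g ((g.val:ℤ)) = (g.val:ℤ)+1 := by
    rw [genB_one g hgv0]; split_ifs <;> omega
  by_cases hgu : g ∈ u <;> by_cases hgv : g ∈ v
  · -- count = 2
    obtain ⟨ul, uh, rfl, hul, huh⟩ := sorted_split hu_sorted hgu
    obtain ⟨vh, vl, rfl, hvh, hvl⟩ := sorted_split hv_sorted hgv
    have hul' : ∀ j ∈ ul, (j.val:ℤ) + 1 ≤ (g.val:ℤ) := by
      intro j hj; have : j.val < g.val := hul j hj; omega
    have hvl' : ∀ j ∈ vl, (j.val:ℤ) + 1 ≤ (g.val:ℤ) := by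
      intro j hj; have : j.val < g.val := hvl j hj; omega
    have hRge : ∀ j ∈ uh ++ vh, (g.val:ℤ) + 1 ≤ (j.val:ℤ) := by
      intro j hj
      rcases List.mem_append.mp hj with h | h
      · have : g.val < j.val := huh j h; omega
      · have : g.val < j.val := hvh j h; omega
    have hcnt : ((ul ++ g :: uh) ++ (vh ++ g :: vl)).count g = 2 := by
      rw [List.count_append, List.count_eq_one_of_mem hu_nd (by simp),
        List.count_eq_one_of_mem hv_nd (by simp)]
    have hvl_fix : wordProdB n vl ((g.val:ℤ)+1) = (g.val:ℤ)+1 :=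
      wordProdB_fix _ _ (fun j hj => genB_fix_of_big j _ (by have := hvl' j hj; omega))
    have hul_fix : wordProdB n ul ((g.val:ℤ)+1) = (g.val:ℤ)+1 :=
      wordProdB_fix _ _ (fun j hj => genB_fix_of_big j _ (by have := hul' j hj; omega))
    have hvh_fix : wordProdB n vh ((g.val:ℤ)) = (g.val:ℤ) :=
      wordProdB_fix _ _ (fun j hj => by
        have := hRge j (List.mem_append.mpr (Or.inr hj))
        exact genB_fix_of_small j _ (by omega) (by omega) (by omega))
    have huh_fix : wordProdB n uh ((g.val:ℤ)) = (g.val:ℤ) :=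
      wordProdB_fix _ _ (fun j hj => by
        have := hRge j (List.mem_append.mpr (Or.inl hj))
        exact genB_fix_of_small j _ (by omega) (by omega) (by omega))
    have hπm : wordProdB n ((ul ++ g :: uh) ++ (vh ++ g :: vl)) ((g.val:ℤ)+1) = (g.val:ℤ)+1 := by
      simp only [wordProdB_append, wordProdB_cons, Equiv.Perm.mul_apply]
      rw [hvl_fix, hgm, hvh_fix, huh_fix, hgi, hul_fix]
    have hRm_ne : wordProdB n (uh ++ vh) ((g.val:ℤ)+1) ≠ (g.val:ℤ)+1 := by
      intro hfix
      have hconj := conj_cancel_pos g hgv0 (uh ++ vh) hRge hfix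
      rw [wordProdB_append] at hconj
      have key : ∀ x : Equiv.Perm ℤ,
          genB n g * (wordProdB n uh * (wordProdB n vh * (genB n g * x))) =
            wordProdB n uh * (wordProdB n vh * x) := by
        intro x
        calc genB n g * (wordProdB n uh * (wordProdB n vh * (genB n g * x)))
            = (genB n g * (wordProdB n uh * wordProdB n vh) * genB n g) * x := by
              simp only [mul_assoc]
          _ = (wordProdB n uh * wordProdB n vh) * x := by rw [hconj]
          _ = wordProdB n uh * (wordProdB n vh * x) := by rw [mul_assoc]
      have heq : wordProdB n ((ul ++ g :: uh) ++ (vh ++ g :: vl)) =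
          wordProdB n (ul ++ ((uh ++ vh) ++ vl)) := by
        simp only [wordProdB_append, wordProdB_cons, mul_assoc]
        rw [key]
      have := hred _ heq.symm
      simp only [List.length_append, List.length_cons] at this
      omega
    set x₀ := (wordProdB n (uh ++ vh)).symm ((g.val:ℤ)+1) with hx₀def
    have hx₀R : wordProdB n (uh ++ vh) x₀ = (g.val:ℤ)+1 := Equiv.apply_symm_apply _ _
    have hx₀range : (g.val:ℤ)+1 ≤ x₀ ∧ x₀ ≤ (n:ℤ) := by
      have hiff := wordProdB_iff (fun y => (g.val:ℤ)+1 ≤ y ∧ y ≤ (n:ℤ)) (uh ++ vh)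
        (fun j hj x => genB_hi_range j ((g.val:ℤ)+1) x (by omega) (hRge j hj)) x₀
      exact hiff.mp (by rw [hx₀R]; exact ⟨le_refl _, hmn⟩)
    have hx₀ne : x₀ ≠ (g.val:ℤ)+1 := fun h => hRm_ne (h ▸ hx₀R)
    have hx₀R' : wordProdB n uh (wordProdB n vh x₀) = (g.val:ℤ)+1 := by
      rw [wordProdB_append, Equiv.Perm.mul_apply] at hx₀R; exact hx₀R
    have hul_abs : -(g.val:ℤ) ≤ wordProdB n ul ((g.val:ℤ)) ∧
        wordProdB n ul ((g.val:ℤ)) ≤ (g.val:ℤ) := by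
      refine wordProdB_pres (fun y => -(g.val:ℤ) ≤ y ∧ y ≤ (g.val:ℤ)) ul ?_ _ ⟨by omega, le_refl _⟩
      intro j hj y hy
      exact genB_abs_le j y _ hi (by have := hul' j hj; omega) hy.1 hy.2
    have hπx₀ : wordProdB n ((ul ++ g :: uh) ++ (vh ++ g :: vl)) x₀ =
        wordProdB n ul ((g.val:ℤ)) := by
      simp only [wordProdB_append, wordProdB_cons, Equiv.Perm.mul_apply]
      rw [wordProdB_fix vl x₀ (fun j hj => genB_fix_of_big j _ (by have := hvl' j hj; omega)),
        genB_fix_of_ne g x₀ hgv0 (by omega) (by omega) (by omega) (by omega),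
        hx₀R', hgm]
    have himg_ne : (Finset.Icc ((g.val:ℤ)+1) (n:ℤ)).image
        (fun j => wordProdB n ((ul ++ g :: uh) ++ (vh ++ g :: vl)) j) ≠
          Finset.Icc ((g.val:ℤ)+1) (n:ℤ) := by
      intro hEq
      have hx₀mem : x₀ ∈ Finset.Icc ((g.val:ℤ)+1) (n:ℤ) :=
        Finset.mem_Icc.mpr ⟨hx₀range.1, hx₀range.2⟩
      have := (image_eq_iff _ _).mp hEq x₀ hx₀mem
      rw [Finset.mem_Icc, hπx₀] at this
      omega
    refine ⟨iff_of_false (by omega) (fun h => himg_ne h), iff_of_true hcnt ⟨hπm, himg_ne⟩,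
      fun h => absurd h (by omega)⟩
  · -- g ∈ u only : count = 1
    obtain ⟨ul, uh, rfl, hul, huh⟩ := sorted_split hu_sorted hgu
    have hul' : ∀ j ∈ ul, (j.val:ℤ) + 1 ≤ (g.val:ℤ) := by
      intro j hj; have : j.val < g.val := hul j hj; omega
    have huh' : ∀ j ∈ uh, (g.val:ℤ) + 1 ≤ (j.val:ℤ) := by
      intro j hj; have : g.val < j.val := huh j hj; omega
    have hcnt : ((ul ++ g :: uh) ++ v).count g = 1 := by
      rw [List.count_append, List.count_eq_one_of_mem hu_nd (by simp),
        List.count_eq_zero_of_not_mem hgv]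
    have hkey : ∀ x, (g.val:ℤ)+1 ≤ x →
        wordProdB n ((ul ++ g :: uh) ++ v) x ≠ (g.val:ℤ)+1 := by
      intro x hx
      have hz : (g.val:ℤ)+1 ≤ wordProdB n v x := by
        refine wordProdB_pres (fun y => (g.val:ℤ)+1 ≤ y) v ?_ x hx
        intro j hj y hy
        refine genB_ge j _ y (by omega) ?_ hy
        have : (j.val:ℤ) ≠ (g.val:ℤ) := val_ne_of_ne (fun he => hgv (he ▸ hj))
        omega
      have hz2 : (g.val:ℤ)+1 ≤ wordProdB n uh (wordProdB n v x) := by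
        refine wordProdB_pres (fun y => (g.val:ℤ)+1 ≤ y) uh ?_ _ hz
        intro j hj y hy
        refine genB_ge j _ y (by omega) (by have := huh' j hj; omega) hy
      simp only [wordProdB_append, wordProdB_cons, Equiv.Perm.mul_apply]
      rcases eq_or_lt_of_le hz2 with heq | hlt
      · rw [← heq, hgm]
        have habs : -(g.val:ℤ) ≤ wordProdB n ul ((g.val:ℤ)) ∧
            wordProdB n ul ((g.val:ℤ)) ≤ (g.val:ℤ) := by
          refine wordProdB_pres (fun y => -(g.val:ℤ) ≤ y ∧ y ≤ (g.val:ℤ)) ul ?_ _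
            ⟨by omega, le_refl _⟩
          intro j hj y hy
          exact genB_abs_le j y _ hi (by have := hul' j hj; omega) hy.1 hy.2
        omega
      · rw [genB_fix_of_ne g _ hgv0 (by omega) (by omega) (by omega) (by omega),
          wordProdB_fix ul _ (fun j hj => genB_fix_of_big j _ (by have := hul' j hj; omega))]
        omega
    have hsymm : (wordProdB n ((ul ++ g :: uh) ++ v)).symm ((g.val:ℤ)+1) < (g.val:ℤ)+1 := by
      by_contra h
      push_neg at h
      exact hkey _ h (Equiv.apply_symm_apply _ _)
    have himg_ne : (Finset.Icc ((g.val:ℤ)+1) (n:ℤ)).image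
        (fun j => wordProdB n ((ul ++ g :: uh) ++ v) j) ≠
          Finset.Icc ((g.val:ℤ)+1) (n:ℤ) := by
      intro hEq
      have hmem : ((g.val:ℤ)+1) ∈ Finset.Icc ((g.val:ℤ)+1) (n:ℤ) :=
        Finset.mem_Icc.mpr ⟨le_refl _, hmn⟩
      rw [← hEq] at hmem
      obtain ⟨x, hx, hπx⟩ := Finset.mem_image.mp hmem
      exact hkey x (Finset.mem_Icc.mp hx).1 hπx
    refine ⟨iff_of_false (by omega) (fun h => himg_ne h),
      iff_of_false (by omega) (fun h => hkey _ (le_refl _) h.1), fun _ => Or.inl hsymm⟩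
  · -- g ∈ v only : count = 1
    obtain ⟨vh, vl, rfl, hvh, hvl⟩ := sorted_split hv_sorted hgv
    have hvl' : ∀ j ∈ vl, (j.val:ℤ) + 1 ≤ (g.val:ℤ) := by
      intro j hj; have : j.val < g.val := hvl j hj; omega
    have hvh' : ∀ j ∈ vh, (g.val:ℤ) + 1 ≤ (j.val:ℤ) := by
      intro j hj; have : g.val < j.val := hvh j hj; omega
    have hcnt : (u ++ (vh ++ g :: vl)).count g = 1 := by
      rw [List.count_append, List.count_eq_zero_of_not_mem hgu,
        List.count_eq_one_of_mem hv_nd (by simp)]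
    have hvl_fix : wordProdB n vl ((g.val:ℤ)+1) = (g.val:ℤ)+1 :=
      wordProdB_fix _ _ (fun j hj => genB_fix_of_big j _ (by have := hvl' j hj; omega))
    have hvh_fix : wordProdB n vh ((g.val:ℤ)) = (g.val:ℤ) :=
      wordProdB_fix _ _ (fun j hj => by
        have := hvh' j hj
        exact genB_fix_of_small j _ (by omega) (by omega) (by omega))
    have hu_abs : -(g.val:ℤ) ≤ wordProdB n u ((g.val:ℤ)) ∧
        wordProdB n u ((g.val:ℤ)) ≤ (g.val:ℤ) := by
      refine wordProdB_pres (fun y => -(g.val:ℤ) ≤ y ∧ y ≤ (g.val:ℤ)) u ?_ _ ⟨by omega, le_refl _⟩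
      intro j hj y hy
      refine genB_abs_le j y _ hi (val_ne_of_ne (fun he => hgu (he ▸ hj))) hy.1 hy.2
    have hπm : wordProdB n (u ++ (vh ++ g :: vl)) ((g.val:ℤ)+1) =
        wordProdB n u ((g.val:ℤ)) := by
      simp only [wordProdB_append, wordProdB_cons, Equiv.Perm.mul_apply]
      rw [hvl_fix, hgm, hvh_fix]
    have himg_ne : (Finset.Icc ((g.val:ℤ)+1) (n:ℤ)).image
        (fun j => wordProdB n (u ++ (vh ++ g :: vl)) j) ≠
          Finset.Icc ((g.val:ℤ)+1) (n:ℤ) := by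
      intro hEq
      have hmem : ((g.val:ℤ)+1) ∈ Finset.Icc ((g.val:ℤ)+1) (n:ℤ) :=
        Finset.mem_Icc.mpr ⟨le_refl _, hmn⟩
      have := (image_eq_iff _ _).mp hEq _ hmem
      rw [Finset.mem_Icc, hπm] at this
      omega
    refine ⟨iff_of_false (by omega) (fun h => himg_ne h),
      iff_of_false (by omega) (fun h => by rw [hπm] at h; omega),
      fun _ => Or.inr (by rw [hπm]; omega)⟩
  · -- count = 0
    have hcnt : (u ++ v).count g = 0 := by
      rw [List.count_append, List.count_eq_zero_of_not_mem hgu,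
        List.count_eq_zero_of_not_mem hgv]
    have himg : ∀ x ∈ Finset.Icc ((g.val:ℤ)+1) (n:ℤ),
        wordProdB n (u ++ v) x ∈ Finset.Icc ((g.val:ℤ)+1) (n:ℤ) := by
      intro x hx
      rw [Finset.mem_Icc] at hx ⊢
      refine wordProdB_pres (fun y => (g.val:ℤ)+1 ≤ y ∧ y ≤ (n:ℤ)) (u ++ v) ?_ x hx
      intro j hj y hy
      have hjne : j ≠ g := by
        rcases List.mem_append.mp hj with h | h
        · exact fun he => hgu (he ▸ h)
        · exact fun he => hgv (he ▸ h)
      have := val_ne_of_ne hjne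
      exact ⟨genB_ge j _ y (by omega) (by omega) hy.1, genB_le j y hy.2⟩
    have himg_eq := (image_eq_iff (wordProdB n (u ++ v)) _).mpr himg
    exact ⟨iff_of_true hcnt himg_eq, iff_of_false (by omega) (fun h => h.2 himg_eq),
      fun h => absurd h (by omega)⟩

lemma partB (hn : 2 ≤ n) (u v : List (Fin n)) (hred : ReducedB n (u ++ v))
    (hu_sorted : u.Pairwise (· < ·)) (hv_sorted : v.Pairwise (· > ·))
    (hu_nd : u.Nodup) (hv_nd : v.Nodup) (G : Fin n) (hG : G.val = 0) :
    ((u ++ v).count G = 0 ↔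
        ((Finset.Icc (1 : ℤ) (n : ℤ)).filter (fun j => wordProdB n (u ++ v) j < 0)).card = 0) ∧
    ((u ++ v).count G = 2 ↔
        ((Finset.Icc (1 : ℤ) (n : ℤ)).filter (fun j => wordProdB n (u ++ v) j < 0)).card = 2) ∧
    ((u ++ v).count G = 1 ↔
        ((Finset.Icc (1 : ℤ) (n : ℤ)).filter (fun j => wordProdB n (u ++ v) j < 0)).card = 1) ∧
    ((u ++ v).count G = 1 →
        ∀ j : ℤ, 1 ≤ j → j ≤ (n : ℤ) → wordProdB n (u ++ v) j < 0 →
          (wordProdB n (u ++ v) j = -1 ∨ j = 1)) := by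
  have hn1 : (1:ℤ) ≤ (n:ℤ) := by exact_mod_cast (by omega : 1 ≤ n)
  have hgz : ∀ x, genB n G x = if x = 1 then -1 else if x = -1 then 1 else x := genB_zeroth G hG
  have e1 : genB n G 1 = -1 := by rw [hgz]; norm_num
  by_cases hgu : G ∈ u <;> by_cases hgv : G ∈ v
  · -- count = 2
    obtain ⟨ul, uh, rfl, hul, huh⟩ := sorted_split hu_sorted hgu
    obtain ⟨vh, vl, rfl, hvh, hvl⟩ := sorted_split hv_sorted hgv
    have hul_nil : ul = [] := by
      cases ul with
      | nil => rfl
      | cons a t =>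
          exact absurd (show a.val < G.val from hul a (List.mem_cons_self)) (by omega)
    have hvl_nil : vl = [] := by
      cases vl with
      | nil => rfl
      | cons a t =>
          exact absurd (show a.val < G.val from hvl a (List.mem_cons_self)) (by omega)
    subst hul_nil hvl_nil
    simp only [List.nil_append] at *
    have hcnt : (G :: uh ++ (vh ++ [G])).count G = 2 := by
      rw [List.count_append, List.count_eq_one_of_mem hu_nd (by simp),
        List.count_eq_one_of_mem hv_nd (by simp)]
    have hR0 : ∀ j ∈ uh ++ vh, j.val ≠ 0 := by
      intro j hj
      rcases List.mem_append.mp hj with h | h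
      · have : G.val < j.val := huh j h; omega
      · have : G.val < j.val := hvh j h; omega
    have hiff : ∀ x, (1 ≤ wordProdB n (uh ++ vh) x ∧ wordProdB n (uh ++ vh) x ≤ (n:ℤ)) ↔
        (1 ≤ x ∧ x ≤ (n:ℤ)) :=
      wordProdB_iff (fun y => 1 ≤ y ∧ y ≤ (n:ℤ)) _ (fun j hj x => genB_pos_range j (hR0 j hj) x)
    have hinj := (wordProdB n (uh ++ vh)).injective
    have hR1ne : wordProdB n (uh ++ vh) 1 ≠ 1 := by
      intro hfix
      have hconj := conj_cancel_zero G hG (uh ++ vh) hR0 hfix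
      rw [wordProdB_append] at hconj
      have heq : wordProdB n (G :: uh ++ (vh ++ [G])) = wordProdB n (uh ++ vh) := by
        simp only [wordProdB_append, wordProdB_cons, wordProdB_nil, mul_one]
        rw [← hconj]
        simp only [mul_assoc]
      have := hred _ heq.symm
      simp only [List.length_append, List.length_cons] at this
      omega
    have hR1pos : 1 ≤ wordProdB n (uh ++ vh) 1 ∧ wordProdB n (uh ++ vh) 1 ≤ (n:ℤ) :=
      (hiff 1).mpr ⟨le_refl 1, hn1⟩
    have hπ : ∀ x, wordProdB n (G :: uh ++ (vh ++ [G])) x =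
        genB n G (wordProdB n (uh ++ vh) (genB n G x)) := by
      intro x
      simp only [wordProdB_append, wordProdB_cons, wordProdB_nil, Equiv.Perm.mul_apply,
        mul_one]
      try rw [wordProdB_append, Equiv.Perm.mul_apply]
    set j₁ := (wordProdB n (uh ++ vh)).symm 1 with hj₁def
    have hj₁ : wordProdB n (uh ++ vh) j₁ = 1 := Equiv.apply_symm_apply _ _
    have hj₁r : 1 ≤ j₁ ∧ j₁ ≤ (n:ℤ) := (hiff j₁).mp (by rw [hj₁]; exact ⟨le_refl 1, hn1⟩)
    have hj₁ne : j₁ ≠ 1 := fun h => hR1ne (h ▸ hj₁)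
    have hπ1 : wordProdB n (G :: uh ++ (vh ++ [G])) 1 < 0 := by
      rw [hπ 1, e1, wordProdB_neg, hgz]
      split_ifs <;> omega
    have hπj₁ : wordProdB n (G :: uh ++ (vh ++ [G])) j₁ = -1 := by
      rw [hπ j₁]
      have eg : genB n G j₁ = j₁ := by rw [hgz]; split_ifs <;> omega
      rw [eg, hj₁, e1]
    have hother : ∀ x, 1 ≤ x → x ≤ (n:ℤ) → x ≠ 1 → x ≠ j₁ →
        0 < wordProdB n (G :: uh ++ (vh ++ [G])) x := by
      intro x hx1 hxn hne1 hnej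
      rw [hπ x]
      have eg : genB n G x = x := by rw [hgz]; split_ifs <;> omega
      rw [eg]
      have hr := (hiff x).mpr ⟨hx1, hxn⟩
      have hrne : wordProdB n (uh ++ vh) x ≠ 1 := fun h => hnej (hinj (h.trans hj₁.symm))
      rw [hgz]
      split_ifs <;> omega
    have hfilter : (Finset.Icc (1:ℤ) (n:ℤ)).filter
        (fun j => wordProdB n (G :: uh ++ (vh ++ [G])) j < 0) = {1, j₁} := by
      ext x
      simp only [Finset.mem_filter, Finset.mem_Icc, Finset.mem_insert, Finset.mem_singleton]
      constructor
      · rintro ⟨⟨hx1, hxn⟩, hneg⟩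
        by_contra hc
        push_neg at hc
        have := hother x hx1 hxn hc.1 hc.2
        omega
      · rintro (rfl | rfl)
        · exact ⟨⟨le_refl 1, hn1⟩, hπ1⟩
        · exact ⟨⟨hj₁r.1, hj₁r.2⟩, by rw [hπj₁]; norm_num⟩
    have hcard : ((Finset.Icc (1:ℤ) (n:ℤ)).filter
        (fun j => wordProdB n (G :: uh ++ (vh ++ [G])) j < 0)).card = 2 := by
      rw [hfilter]
      exact Finset.card_pair (Ne.symm hj₁ne)
    exact ⟨by omega, by omega, by omega, fun h => absurd h (by omega)⟩
  · -- G ∈ u only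
    obtain ⟨ul, uh, rfl, hul, huh⟩ := sorted_split hu_sorted hgu
    have hul_nil : ul = [] := by
      cases ul with
      | nil => rfl
      | cons a t =>
          exact absurd (show a.val < G.val from hul a (List.mem_cons_self)) (by omega)
    subst hul_nil
    simp only [List.nil_append] at *
    have hcnt : (G :: uh ++ v).count G = 1 := by
      rw [List.count_append, List.count_eq_one_of_mem hu_nd (by simp),
        List.count_eq_zero_of_not_mem hgv]
    have hS0 : ∀ j ∈ uh ++ v, j.val ≠ 0 := by
      intro j hj
      rcases List.mem_append.mp hj with h | h
      · have : G.val < j.val := huh j h; omega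
      · intro h0; have hje : j = G := Fin.ext (by omega); exact hgv (hje ▸ h)
    have hiff : ∀ x, (1 ≤ wordProdB n (uh ++ v) x ∧ wordProdB n (uh ++ v) x ≤ (n:ℤ)) ↔
        (1 ≤ x ∧ x ≤ (n:ℤ)) :=
      wordProdB_iff (fun y => 1 ≤ y ∧ y ≤ (n:ℤ)) _ (fun j hj x => genB_pos_range j (hS0 j hj) x)
    have hinj := (wordProdB n (uh ++ v)).injective
    have hπ : ∀ x, wordProdB n (G :: uh ++ v) x = genB n G (wordProdB n (uh ++ v) x) := by
      intro x
      simp only [wordProdB_append, wordProdB_cons, Equiv.Perm.mul_apply]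
      try rw [wordProdB_append, Equiv.Perm.mul_apply]
    set j₀ := (wordProdB n (uh ++ v)).symm 1 with hj₀def
    have hj₀ : wordProdB n (uh ++ v) j₀ = 1 := Equiv.apply_symm_apply _ _
    have hj₀r : 1 ≤ j₀ ∧ j₀ ≤ (n:ℤ) := (hiff j₀).mp (by rw [hj₀]; exact ⟨le_refl 1, hn1⟩)
    have hπj₀ : wordProdB n (G :: uh ++ v) j₀ = -1 := by rw [hπ j₀, hj₀, e1]
    have hother : ∀ x, 1 ≤ x → x ≤ (n:ℤ) → x ≠ j₀ → 0 < wordProdB n (G :: uh ++ v) x := by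
      intro x hx1 hxn hnej
      rw [hπ x]
      have hr := (hiff x).mpr ⟨hx1, hxn⟩
      have hrne : wordProdB n (uh ++ v) x ≠ 1 := fun h => hnej (hinj (h.trans hj₀.symm))
      rw [hgz]
      split_ifs <;> omega
    have hfilter : (Finset.Icc (1:ℤ) (n:ℤ)).filter
        (fun j => wordProdB n (G :: uh ++ v) j < 0) = {j₀} := by
      ext x
      simp only [Finset.mem_filter, Finset.mem_Icc, Finset.mem_singleton]
      constructor
      · rintro ⟨⟨hx1, hxn⟩, hneg⟩
        by_contra hc
        have := hother x hx1 hxn hc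
        omega
      · rintro rfl
        exact ⟨⟨hj₀r.1, hj₀r.2⟩, by rw [hπj₀]; norm_num⟩
    have hcard : ((Finset.Icc (1:ℤ) (n:ℤ)).filter
        (fun j => wordProdB n (G :: uh ++ v) j < 0)).card = 1 := by
      rw [hfilter]; exact Finset.card_singleton _
    refine ⟨by omega, by omega, by omega, fun _ => ?_⟩
    intro j hj1 hjn hneg
    by_cases hj : j = j₀
    · subst hj; exact Or.inl hπj₀
    · exact absurd hneg (by have := hother j hj1 hjn hj; omega)
  · -- G ∈ v only
    obtain ⟨vh, vl, rfl, hvh, hvl⟩ := sorted_split hv_sorted hgv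
    have hvl_nil : vl = [] := by
      cases vl with
      | nil => rfl
      | cons a t =>
          exact absurd (show a.val < G.val from hvl a (List.mem_cons_self)) (by omega)
    subst hvl_nil
    have hcnt : (u ++ (vh ++ [G])).count G = 1 := by
      rw [List.count_append, List.count_eq_zero_of_not_mem hgu,
        List.count_eq_one_of_mem hv_nd (by simp)]
    have hS0 : ∀ j ∈ u ++ vh, j.val ≠ 0 := by
      intro j hj
      rcases List.mem_append.mp hj with h | h
      · intro h0; have hje : j = G := Fin.ext (by omega); exact hgu (hje ▸ h)
      · have : G.val < j.val := hvh j h; omega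
    have hiff : ∀ x, (1 ≤ wordProdB n (u ++ vh) x ∧ wordProdB n (u ++ vh) x ≤ (n:ℤ)) ↔
        (1 ≤ x ∧ x ≤ (n:ℤ)) :=
      wordProdB_iff (fun y => 1 ≤ y ∧ y ≤ (n:ℤ)) _ (fun j hj x => genB_pos_range j (hS0 j hj) x)
    have hπ : ∀ x, wordProdB n (u ++ (vh ++ [G])) x =
        wordProdB n (u ++ vh) (genB n G x) := by
      intro x
      simp only [wordProdB_append, wordProdB_cons, wordProdB_nil, Equiv.Perm.mul_apply, mul_one]
      try rw [wordProdB_append, Equiv.Perm.mul_apply]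
    have hπ1 : wordProdB n (u ++ (vh ++ [G])) 1 < 0 := by
      rw [hπ 1, e1, wordProdB_neg]
      have := (hiff 1).mpr ⟨le_refl 1, hn1⟩
      omega
    have hother : ∀ x, 1 ≤ x → x ≤ (n:ℤ) → x ≠ 1 → 0 < wordProdB n (u ++ (vh ++ [G])) x := by
      intro x hx1 hxn hne1
      rw [hπ x]
      have eg : genB n G x = x := by rw [hgz]; split_ifs <;> omega
      rw [eg]
      have := (hiff x).mpr ⟨hx1, hxn⟩
      omega
    have hfilter : (Finset.Icc (1:ℤ) (n:ℤ)).filter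
        (fun j => wordProdB n (u ++ (vh ++ [G])) j < 0) = {1} := by
      ext x
      simp only [Finset.mem_filter, Finset.mem_Icc, Finset.mem_singleton]
      constructor
      · rintro ⟨⟨hx1, hxn⟩, hneg⟩
        by_contra hc
        have := hother x hx1 hxn hc
        omega
      · rintro rfl
        exact ⟨⟨le_refl 1, hn1⟩, hπ1⟩
    have hcard : ((Finset.Icc (1:ℤ) (n:ℤ)).filter
        (fun j => wordProdB n (u ++ (vh ++ [G])) j < 0)).card = 1 := by
      rw [hfilter]; exact Finset.card_singleton _
    refine ⟨by omega, by omega, by omega, fun _ => ?_⟩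
    intro j hj1 hjn hneg
    by_cases hj : j = 1
    · exact Or.inr hj
    · exact absurd hneg (by have := hother j hj1 hjn hj; omega)
  · -- count = 0
    have hcnt : (u ++ v).count G = 0 := by
      rw [List.count_append, List.count_eq_zero_of_not_mem hgu,
        List.count_eq_zero_of_not_mem hgv]
    have hS0 : ∀ j ∈ u ++ v, j.val ≠ 0 := by
      intro j hj
      rcases List.mem_append.mp hj with h | h
      · intro h0; have hje : j = G := Fin.ext (by omega); exact hgu (hje ▸ h)
      · intro h0; have hje : j = G := Fin.ext (by omega); exact hgv (hje ▸ h)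
    have hpos : ∀ x, 1 ≤ x → x ≤ (n:ℤ) → 1 ≤ wordProdB n (u ++ v) x :=
      fun x hx1 hxn => ((wordProdB_iff (fun y => 1 ≤ y ∧ y ≤ (n:ℤ)) _
        (fun j hj x => genB_pos_range j (hS0 j hj) x) x).mpr ⟨hx1, hxn⟩).1
    have hfilter : (Finset.Icc (1:ℤ) (n:ℤ)).filter
        (fun j => wordProdB n (u ++ v) j < 0) = ∅ := by
      ext x
      simp only [Finset.mem_filter, Finset.mem_Icc, Finset.notMem_empty, iff_false, not_and]
      rintro ⟨hx1, hxn⟩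
      have := hpos x hx1 hxn
      omega
    have hcard : ((Finset.Icc (1:ℤ) (n:ℤ)).filter
        (fun j => wordProdB n (u ++ v) j < 0)).card = 0 := by
      rw [hfilter]; exact Finset.card_empty
    exact ⟨by omega, by omega, by omega, fun h => absurd h (by omega)⟩

end Helpers

/-- The word `s_0 s_1 ⋯ s_{n-2} s_{n-1} s_{n-2} ⋯ s_1 s_0`. -/
def wordOneB (n : ℕ) : List (Fin n) :=
  List.finRange n ++ ((List.finRange n).dropLast).reverse

/-- The word `s_{n-1} s_{n-2} ⋯ s_1 s_0 s_1 ⋯ s_{n-2} s_{n-1}`. -/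
def wordTwoB (n : ℕ) : List (Fin n) :=
  (List.finRange n).reverse ++ (List.finRange n).tail

theorem stmt8 (n : ℕ) (hn : 2 ≤ n) (π : Equiv.Perm ℤ)
    (w : List (Fin n)) (hsub : w.Sublist (wordOneB n)) (hred : ReducedB n w)
    (hprod : wordProdB n w = π) :
    (∀ g : Fin n, 1 ≤ g.val →
      ((w.count g = 0 ↔
          (Finset.Icc ((g.val : ℤ) + 1) (n : ℤ)).image (fun j => π j) =
            Finset.Icc ((g.val : ℤ) + 1) (n : ℤ)) ∧
       (w.count g = 2 ↔
          (π ((g.val : ℤ) + 1) = (g.val : ℤ) + 1 ∧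
            (Finset.Icc ((g.val : ℤ) + 1) (n : ℤ)).image (fun j => π j) ≠
              Finset.Icc ((g.val : ℤ) + 1) (n : ℤ))) ∧
       (w.count g = 1 →
          (π.symm ((g.val : ℤ) + 1) < (g.val : ℤ) + 1 ∨
            π ((g.val : ℤ) + 1) < (g.val : ℤ) + 1)))) ∧
    ((w.count (⟨0, by omega⟩ : Fin n) = 0 ↔
        ((Finset.Icc (1 : ℤ) (n : ℤ)).filter (fun j => π j < 0)).card = 0) ∧
     (w.count (⟨0, by omega⟩ : Fin n) = 2 ↔
        ((Finset.Icc (1 : ℤ) (n : ℤ)).filter (fun j => π j < 0)).card = 2) ∧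
     (w.count (⟨0, by omega⟩ : Fin n) = 1 ↔
        ((Finset.Icc (1 : ℤ) (n : ℤ)).filter (fun j => π j < 0)).card = 1) ∧
     (w.count (⟨0, by omega⟩ : Fin n) = 1 →
        ∀ j : ℤ, 1 ≤ j → j ≤ (n : ℤ) → π j < 0 → (π j = -1 ∨ j = 1))) := by
  subst hprod
  rw [wordOneB] at hsub
  obtain ⟨u, v, rfl, hu, hv⟩ := List.sublist_append_iff.mp hsub
  have hu_sorted : u.Pairwise (· < ·) := List.Pairwise.sublist hu (List.pairwise_lt_finRange n)
  have hv_sorted : v.Pairwise (· > ·) := by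
    refine List.Pairwise.sublist hv ?_
    rw [List.pairwise_reverse]
    exact List.Pairwise.sublist (List.dropLast_sublist _) (List.pairwise_lt_finRange n)
  have hu_nd : u.Nodup := List.Nodup.sublist hu (List.nodup_finRange n)
  have hv_nd : v.Nodup := List.Nodup.sublist hv
    (by rw [List.nodup_reverse]
        exact List.Nodup.sublist (List.dropLast_sublist _) (List.nodup_finRange n))
  constructor
  · intro g hg
    exact partA hn u v hred hu_sorted hv_sorted hu_nd hv_nd g hg
  · exact partB hn u v hred hu_sorted hv_sorted hu_nd hv_nd ⟨0, by omega⟩ rfl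
end

section
/- Let n ≥ 3, let π ∈ D_n be boolean, and let w be any reduced expression of π that is a subsequence of the word (s_0, s_1, s_2, …, s_{n−2}, s_{n−1}, s_{n−2}, …, s_2, s_1, s_0). Then for each 2 ≤ i ≤ n−1: s_i occurs 0 times in w if and only if π({i+1,…,n}) = {i+1,…,n}; s_i occurs exactly 2 times in w if and only if π(i+1) = i+1 and π({i+1,…,n}) ≠ {i+1,…,n}; and if s_i occurs exactly once then i+1 is a top excedance of π or of π^{-1}. -/
def genD (n : ℕ) (i : Fin n) : Equiv.Perm ℤ :=
  if i.val = 0 then Equiv.swap 1 (-2) * Equiv.swap (-1) 2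
  else Equiv.swap (i.val : ℤ) ((i.val : ℤ) + 1) * Equiv.swap (-(i.val : ℤ)) (-((i.val : ℤ) + 1))

def wordProdD (n : ℕ) (w : List (Fin n)) : Equiv.Perm ℤ :=
  (w.map (genD n)).prod

namespace Aux
variable {n : ℕ}

lemma one_le_val {i : Fin n} (h : i.val ≠ 0) : 1 ≤ (i.val : ℤ) := by
  exact_mod_cast Nat.one_le_iff_ne_zero.2 h

lemma genD_apply_self (i : Fin n) (h : i.val ≠ 0) : genD n i (i.val : ℤ) = (i.val : ℤ) + 1 := by
  have h1 := one_le_val h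
  have e : Equiv.swap (-(i.val : ℤ)) (-((i.val : ℤ) + 1)) (i.val : ℤ) = (i.val : ℤ) :=
    Equiv.swap_apply_of_ne_of_ne (by omega) (by omega)
  simp only [genD, if_neg h, Equiv.Perm.mul_apply, e, Equiv.swap_apply_left]

lemma genD_apply_succ (i : Fin n) (h : i.val ≠ 0) : genD n i ((i.val : ℤ) + 1) = (i.val : ℤ) := by
  have h1 := one_le_val h
  have e : Equiv.swap (-(i.val : ℤ)) (-((i.val : ℤ) + 1)) ((i.val : ℤ) + 1) = (i.val : ℤ) + 1 :=
    Equiv.swap_apply_of_ne_of_ne (by omega) (by omega)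
  simp only [genD, if_neg h, Equiv.Perm.mul_apply, e, Equiv.swap_apply_right]

lemma genD_apply_negself (i : Fin n) (h : i.val ≠ 0) :
    genD n i (-(i.val : ℤ)) = -((i.val : ℤ) + 1) := by
  have h1 := one_le_val h
  simp only [genD, if_neg h, Equiv.Perm.mul_apply, Equiv.swap_apply_left]
  exact Equiv.swap_apply_of_ne_of_ne (by omega) (by omega)

lemma genD_apply_negsucc (i : Fin n) (h : i.val ≠ 0) :
    genD n i (-((i.val : ℤ) + 1)) = -(i.val : ℤ) := by
  have h1 := one_le_val h
  simp only [genD, if_neg h, Equiv.Perm.mul_apply, Equiv.swap_apply_right]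
  exact Equiv.swap_apply_of_ne_of_ne (by omega) (by omega)

lemma genD_fix (i : Fin n) (h : i.val ≠ 0) {x : ℤ} (h1 : x ≠ (i.val : ℤ))
    (h2 : x ≠ (i.val : ℤ) + 1) (h3 : x ≠ -(i.val : ℤ)) (h4 : x ≠ -((i.val : ℤ) + 1)) :
    genD n i x = x := by
  simp only [genD, if_neg h, Equiv.Perm.mul_apply]
  rw [Equiv.swap_apply_of_ne_of_ne h3 h4, Equiv.swap_apply_of_ne_of_ne h1 h2]

lemma genD0_one (i : Fin n) (h : i.val = 0) : genD n i 1 = -2 := by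
  have e : Equiv.swap (-1 : ℤ) 2 1 = 1 := Equiv.swap_apply_of_ne_of_ne (by omega) (by omega)
  simp only [genD, if_pos h, Equiv.Perm.mul_apply, e, Equiv.swap_apply_left]

lemma genD0_negtwo (i : Fin n) (h : i.val = 0) : genD n i (-2) = 1 := by
  have e : Equiv.swap (-1 : ℤ) 2 (-2) = -2 := Equiv.swap_apply_of_ne_of_ne (by omega) (by omega)
  simp only [genD, if_pos h, Equiv.Perm.mul_apply, e, Equiv.swap_apply_right]

lemma genD0_negone (i : Fin n) (h : i.val = 0) : genD n i (-1) = 2 := by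
  simp only [genD, if_pos h, Equiv.Perm.mul_apply, Equiv.swap_apply_left]
  exact Equiv.swap_apply_of_ne_of_ne (by omega) (by omega)

lemma genD0_two (i : Fin n) (h : i.val = 0) : genD n i 2 = -1 := by
  simp only [genD, if_pos h, Equiv.Perm.mul_apply, Equiv.swap_apply_right]
  exact Equiv.swap_apply_of_ne_of_ne (by omega) (by omega)

lemma genD0_fix (i : Fin n) (h : i.val = 0) {x : ℤ} (h1 : x ≠ 1) (h2 : x ≠ -1) (h3 : x ≠ 2)
    (h4 : x ≠ -2) : genD n i x = x := by
  simp only [genD, if_pos h, Equiv.Perm.mul_apply]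
  rw [Equiv.swap_apply_of_ne_of_ne h2 h3, Equiv.swap_apply_of_ne_of_ne h1 h4]

/-- letters `> |x|` fix `x`. -/
lemma genD_fix_small (i : Fin n) {x : ℤ} (hx1 : -(i.val : ℤ) < x) (hx2 : x < (i.val : ℤ)) :
    genD n i x = x := by
  by_cases h : i.val = 0
  · rw [h] at hx1 hx2; omega
  · exact genD_fix i h (by omega) (by omega) (by omega) (by omega)

/-- small letters fix big positive values: `i+2 ≤ x`, `3 ≤ x`. -/
lemma genD_fix_big (i : Fin n) {x : ℤ} (hx1 : (i.val : ℤ) + 2 ≤ x) (hx2 : 3 ≤ x) :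
    genD n i x = x := by
  by_cases h : i.val = 0
  · exact genD0_fix i h (by omega) (by omega) (by omega) (by omega)
  · exact genD_fix i h (by omega) (by omega) (by omega) (by omega)

lemma genD_le (i : Fin n) {k x : ℤ} (hk : 2 ≤ k) (hik : (i.val : ℤ) ≠ k) (hx : x ≤ k) :
    genD n i x ≤ k := by
  by_cases h : i.val = 0
  · rcases eq_or_ne x 1 with rfl | h1
    · rw [genD0_one i h]; omega
    rcases eq_or_ne x (-1) with rfl | h2
    · rw [genD0_negone i h]; omega
    rcases eq_or_ne x 2 with rfl | h3
    · rw [genD0_two i h]; omega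
    rcases eq_or_ne x (-2) with rfl | h4
    · rw [genD0_negtwo i h]; omega
    · rw [genD0_fix i h h1 h2 h3 h4]; omega
  · have h1 := one_le_val h
    rcases eq_or_ne x (i.val : ℤ) with rfl | h1'
    · rw [genD_apply_self i h]; omega
    rcases eq_or_ne x ((i.val : ℤ) + 1) with rfl | h2'
    · rw [genD_apply_succ i h]; omega
    rcases eq_or_ne x (-(i.val : ℤ)) with rfl | h3'
    · rw [genD_apply_negself i h]; omega
    rcases eq_or_ne x (-((i.val : ℤ) + 1)) with rfl | h4'
    · rw [genD_apply_negsucc i h]; omega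
    · rw [genD_fix i h h1' h2' h3' h4']; omega

/-- letters `≠ g` preserve the window `[g+1, n]` (for `2 ≤ g`). -/
lemma genD_mem (i g : Fin n) (hg : 2 ≤ g.val) (hig : i.val ≠ g.val) {x : ℤ}
    (hx1 : (g.val : ℤ) + 1 ≤ x) (hx2 : x ≤ (n : ℤ)) :
    (g.val : ℤ) + 1 ≤ genD n i x ∧ genD n i x ≤ (n : ℤ) := by
  have hgz : (2 : ℤ) ≤ (g.val : ℤ) := by exact_mod_cast hg
  rcases lt_or_gt_of_ne (fun hh : (i.val : ℤ) = (g.val : ℤ) => hig (by exact_mod_cast hh)) with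
    hlt | hgt
  · rw [genD_fix_big i (by omega) (by omega)]; exact ⟨hx1, hx2⟩
  · have h0 : i.val ≠ 0 := by omega
    have hin : (i.val : ℤ) < (n : ℤ) := by exact_mod_cast i.isLt
    rcases eq_or_ne x (i.val : ℤ) with rfl | h1'
    · rw [genD_apply_self i h0]; omega
    rcases eq_or_ne x ((i.val : ℤ) + 1) with rfl | h2'
    · rw [genD_apply_succ i h0]; omega
    · rw [genD_fix i h0 h1' h2' (by omega) (by omega)]; exact ⟨hx1, hx2⟩


lemma wordProdD_nil : wordProdD n [] = 1 := rfl

lemma wordProdD_cons (i : Fin n) (l : List (Fin n)) :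
    wordProdD n (i :: l) = genD n i * wordProdD n l := by
  simp [wordProdD]

lemma wordProdD_append (l₁ l₂ : List (Fin n)) :
    wordProdD n (l₁ ++ l₂) = wordProdD n l₁ * wordProdD n l₂ := by
  simp [wordProdD]

lemma wordProdD_singleton (i : Fin n) : wordProdD n [i] = genD n i := by
  simp [wordProdD]

lemma genD_mul_self (i : Fin n) : genD n i * genD n i = 1 := by
  have key : ∀ a b c d : ℤ, a ≠ c → a ≠ d → b ≠ c → b ≠ d →
      (Equiv.swap a b * Equiv.swap c d) * (Equiv.swap a b * Equiv.swap c d) = 1 := by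
    intro a b c d h1 h2 h3 h4
    have hd : (Equiv.swap a b).Disjoint (Equiv.swap c d) := by
      intro x
      by_cases hx : x = a ∨ x = b
      · right; rcases hx with rfl | rfl
        · exact Equiv.swap_apply_of_ne_of_ne h1 h2
        · exact Equiv.swap_apply_of_ne_of_ne h3 h4
      · left; push_neg at hx; exact Equiv.swap_apply_of_ne_of_ne hx.1 hx.2
    have hc := hd.commute
    calc (Equiv.swap a b * Equiv.swap c d) * (Equiv.swap a b * Equiv.swap c d)
        = Equiv.swap a b * (Equiv.swap c d * Equiv.swap a b) * Equiv.swap c d := by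
          group
      _ = Equiv.swap a b * (Equiv.swap a b * Equiv.swap c d) * Equiv.swap c d := by
          rw [hc.eq]
      _ = (Equiv.swap a b * Equiv.swap a b) * (Equiv.swap c d * Equiv.swap c d) := by
          group
      _ = 1 := by rw [Equiv.swap_mul_self, Equiv.swap_mul_self, one_mul]
  by_cases h : i.val = 0
  · simp only [genD, if_pos h]
    exact key _ _ _ _ (by omega) (by omega) (by omega) (by omega)
  · have h1 := one_le_val h
    simp only [genD, if_neg h]
    exact key _ _ _ _ (by omega) (by omega) (by omega) (by omega)

lemma genD_inv (i : Fin n) : (genD n i)⁻¹ = genD n i :=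
  inv_eq_of_mul_eq_one_right (genD_mul_self i)

lemma wordProdD_reverse (l : List (Fin n)) :
    wordProdD n l.reverse = (wordProdD n l)⁻¹ := by
  induction l with
  | nil => simp [wordProdD]
  | cons i t ih =>
    rw [List.reverse_cons, wordProdD_append, wordProdD_cons, ih, wordProdD_cons,
      wordProdD_nil, mul_one, mul_inv_rev, genD_inv]

lemma wordProdD_fix (l : List (Fin n)) {x : ℤ} (h : ∀ i ∈ l, genD n i x = x) :
    wordProdD n l x = x := by
  induction l with
  | nil => rfl
  | cons i t ih =>
    rw [wordProdD_cons, Equiv.Perm.mul_apply, ih (fun j hj => h j (List.mem_cons_of_mem _ hj)),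
      h i List.mem_cons_self]

lemma wordProdD_le (l : List (Fin n)) {k x : ℤ} (hk : 2 ≤ k)
    (h : ∀ i ∈ l, (i.val : ℤ) ≠ k) (hx : x ≤ k) : wordProdD n l x ≤ k := by
  induction l with
  | nil => exact hx
  | cons i t ih =>
    rw [wordProdD_cons, Equiv.Perm.mul_apply]
    exact genD_le i hk (h i List.mem_cons_self)
      (ih (fun j hj => h j (List.mem_cons_of_mem _ hj)))

lemma wordProdD_mem (l : List (Fin n)) (g : Fin n) (hg : 2 ≤ g.val)
    (h : ∀ i ∈ l, i.val ≠ g.val) {x : ℤ} (hx1 : (g.val : ℤ) + 1 ≤ x) (hx2 : x ≤ (n : ℤ)) :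
    (g.val : ℤ) + 1 ≤ wordProdD n l x ∧ wordProdD n l x ≤ (n : ℤ) := by
  induction l with
  | nil => exact ⟨hx1, hx2⟩
  | cons i t ih =>
    rw [wordProdD_cons, Equiv.Perm.mul_apply]
    obtain ⟨u1, u2⟩ := ih (fun j hj => h j (List.mem_cons_of_mem _ hj))
    exact genD_mem i g hg (h i List.mem_cons_self) u1 u2

lemma genD_disjoint (i j : Fin n) (hi : i.val ≠ 0) (hij : i.val + 2 ≤ j.val) :
    (genD n i).Disjoint (genD n j) := by
  have h1 := one_le_val hi
  have hj : j.val ≠ 0 := by omega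
  have hij' : (i.val : ℤ) + 2 ≤ (j.val : ℤ) := by exact_mod_cast hij
  intro x
  by_cases hx : x = (i.val : ℤ) ∨ x = (i.val : ℤ) + 1 ∨ x = -(i.val : ℤ) ∨
      x = -((i.val : ℤ) + 1)
  · right
    rcases hx with rfl | rfl | rfl | rfl <;>
      exact genD_fix j hj (by omega) (by omega) (by omega) (by omega)
  · left; push_neg at hx
    exact genD_fix i hi hx.1 hx.2.1 hx.2.2.1 hx.2.2.2

lemma commute_genD_word (g : Fin n) (hg : 1 ≤ g.val) (l : List (Fin n))
    (h : ∀ j ∈ l, g.val + 2 ≤ j.val) : Commute (genD n g) (wordProdD n l) := by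
  apply Commute.list_prod_right
  intro x hx
  simp only [List.mem_map] at hx
  obtain ⟨j, hj, rfl⟩ := hx
  exact (genD_disjoint g j (by omega) (h j hj)).commute


/-- Evaluation of the count-2 product at `g+1`. -/
lemma fix2 (g : Fin n) (hg : 2 ≤ g.val) (a₂ a₁ b₁ b₂ : List (Fin n))
    (ha₂ : ∀ i ∈ a₂, i.val < g.val) (ha₁ : ∀ i ∈ a₁, g.val < i.val)
    (hb₁ : ∀ i ∈ b₁, g.val < i.val) (hb₂ : ∀ i ∈ b₂, i.val < g.val) :
    (wordProdD n a₂ * (genD n g * (wordProdD n a₁ * (wordProdD n b₁ *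
      (genD n g * wordProdD n b₂))))) ((g.val : ℤ) + 1) = (g.val : ℤ) + 1 := by
  have hg0 : g.val ≠ 0 := by omega
  have hgz : (2 : ℤ) ≤ (g.val : ℤ) := by exact_mod_cast hg
  simp only [Equiv.Perm.mul_apply]
  rw [wordProdD_fix b₂ (fun i hi => genD_fix_big i
      (by have := hb₂ i hi; omega) (by omega)),
    genD_apply_succ g hg0,
    wordProdD_fix b₁ (fun i hi => genD_fix_small i
      (by have := hb₁ i hi; omega) (by have := hb₁ i hi; omega)),
    wordProdD_fix a₁ (fun i hi => genD_fix_small i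
      (by have := ha₁ i hi; omega) (by have := ha₁ i hi; omega)),
    genD_apply_self g hg0,
    wordProdD_fix a₂ (fun i hi => genD_fix_big i
      (by have := ha₂ i hi; omega) (by omega))]

/-- Evaluation of the count-1 product at `g+1`. -/
lemma escape1 (g : Fin n) (hg : 2 ≤ g.val) (a b₁ b₂ : List (Fin n))
    (ha : ∀ i ∈ a, i.val ≠ g.val) (hb₁ : ∀ i ∈ b₁, g.val < i.val)
    (hb₂ : ∀ i ∈ b₂, i.val < g.val) :
    (wordProdD n a * (wordProdD n b₁ * (genD n g * wordProdD n b₂)))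
      ((g.val : ℤ) + 1) ≤ (g.val : ℤ) := by
  have hg0 : g.val ≠ 0 := by omega
  have hgz : (2 : ℤ) ≤ (g.val : ℤ) := by exact_mod_cast hg
  simp only [Equiv.Perm.mul_apply]
  rw [wordProdD_fix b₂ (fun i hi => genD_fix_big i
      (by have := hb₂ i hi; omega) (by omega)),
    genD_apply_succ g hg0,
    wordProdD_fix b₁ (fun i hi => genD_fix_small i
      (by have := hb₁ i hi; omega) (by have := hb₁ i hi; omega))]
  exact wordProdD_le a hgz (fun i hi => by have := ha i hi; exact_mod_cast this) le_rfl

/-- Evaluation of the count-2 escape product at `g+2`. -/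
lemma escape2 (g g₂ : Fin n) (hg : 2 ≤ g.val) (hg₂ : g₂.val = g.val + 1)
    (a₂ a₁ s b₂ : List (Fin n)) (ha₂ : ∀ i ∈ a₂, i.val < g.val)
    (ha₁ : ∀ i ∈ a₁, g.val + 1 < i.val) (hs : ∀ i ∈ s, g.val + 1 < i.val)
    (hb₂ : ∀ i ∈ b₂, i.val < g.val) :
    (wordProdD n a₂ * (genD n g * (wordProdD n a₁ * (wordProdD n s *
      (genD n g₂ * (genD n g * wordProdD n b₂)))))) ((g.val : ℤ) + 2) ≤ (g.val : ℤ) := by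
  have hg0 : g.val ≠ 0 := by omega
  have hg₂0 : g₂.val ≠ 0 := by omega
  have hgz : (2 : ℤ) ≤ (g.val : ℤ) := by exact_mod_cast hg
  have hg₂z : (g₂.val : ℤ) = (g.val : ℤ) + 1 := by exact_mod_cast hg₂
  have e2 : (g.val : ℤ) + 2 = (g₂.val : ℤ) + 1 := by omega
  simp only [Equiv.Perm.mul_apply]
  rw [wordProdD_fix b₂ (fun i hi => genD_fix_big i
      (by have := hb₂ i hi; omega) (by omega)),
    genD_fix g hg0 (x := (g.val : ℤ) + 2) (by omega) (by omega) (by omega) (by omega),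
    e2, genD_apply_succ g₂ hg₂0, hg₂z,
    wordProdD_fix s (fun i hi => genD_fix_small i
      (by have := hs i hi; omega) (by have := hs i hi; omega)),
    wordProdD_fix a₁ (fun i hi => genD_fix_small i
      (by have := ha₁ i hi; omega) (by have := ha₁ i hi; omega)),
    genD_apply_succ g hg0]
  exact wordProdD_le a₂ hgz (fun i hi => by have := ha₂ i hi; omega) le_rfl


lemma main2 : ∀ (k : ℕ) (g : Fin n) (π : Equiv.Perm ℤ) (a₂ a₁ b₁ b₂ : List (Fin n)),
    n ≤ g.val + k → 2 ≤ g.val →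
    (∀ i ∈ a₂, i.val < g.val) → (∀ i ∈ a₁, g.val < i.val) →
    (∀ i ∈ b₁, g.val < i.val) → (∀ i ∈ b₂, i.val < g.val) →
    a₁.Pairwise (· < ·) → b₁.Pairwise (· > ·) →
    wordProdD n ((a₂ ++ g :: a₁) ++ (b₁ ++ g :: b₂)) = π →
    (Finset.Icc ((g.val : ℤ) + 1) (n : ℤ)).image (fun j => π j) =
      Finset.Icc ((g.val : ℤ) + 1) (n : ℤ) →
    ∃ w' : List (Fin n), wordProdD n w' = π ∧
      w'.length < ((a₂ ++ g :: a₁) ++ (b₁ ++ g :: b₂)).length := by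
  intro k
  induction k with
  | zero => intro g π a₂ a₁ b₁ b₂ hk; exact absurd hk (by have := g.isLt; omega)
  | succ k ih =>
    intro g π a₂ a₁ b₁ b₂ hk hg ha₂ ha₁ hb₁ hb₂ hpa hpb hw him
    have hg0 : g.val ≠ 0 := by omega
    have hgz : (2 : ℤ) ≤ (g.val : ℤ) := by exact_mod_cast hg
    have hπ : π = wordProdD n a₂ * (genD n g * (wordProdD n a₁ * (wordProdD n b₁ *
        (genD n g * wordProdD n b₂)))) := by
      rw [← hw]; simp [wordProdD_append, wordProdD_cons, mul_assoc]
    have hfix : π ((g.val : ℤ) + 1) = (g.val : ℤ) + 1 := by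
      rw [hπ]; exact fix2 g hg a₂ a₁ b₁ b₂ ha₂ ha₁ hb₁ hb₂
    have him' : ∀ y : ℤ, (∃ z, ((g.val : ℤ) + 1 ≤ z ∧ z ≤ (n : ℤ)) ∧ π z = y) ↔
        ((g.val : ℤ) + 1 ≤ y ∧ y ≤ (n : ℤ)) := by
      intro y
      rw [← Finset.mem_Icc, ← him]
      simp [Finset.mem_image, Finset.mem_Icc]
    by_cases hA : ∃ i ∈ a₁, i.val = g.val + 1
    · -- a₁ starts with g+1
      obtain ⟨gA, hgAm, hgA⟩ := hA
      cases a₁ with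
      | nil => exact absurd hgAm List.not_mem_nil
      | cons x t =>
        have hpc := List.pairwise_cons.mp hpa
        have hx : x.val = g.val + 1 := by
          rcases List.mem_cons.mp hgAm with rfl | hmem
          · exact hgA
          · have h1 := hpc.1 gA hmem
            have h2 := ha₁ x List.mem_cons_self
            rw [Fin.lt_def] at h1; omega
        have ht : ∀ i ∈ t, g.val + 1 < i.val := by
          intro i hi; have := hpc.1 i hi; rw [Fin.lt_def] at this; omega
        by_cases hB : ∃ i ∈ b₁, i.val = g.val + 1
        · -- recurse with g' = x
          obtain ⟨gB, hgBm, hgB⟩ := hB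
          obtain ⟨s, t₂, rfl⟩ := List.append_of_mem hgBm
          rw [List.pairwise_append] at hpb
          have ht₂ : t₂ = [] := by
            rw [List.eq_nil_iff_forall_not_mem]
            intro i hi
            have h1 := (List.pairwise_cons.mp hpb.2.1).1 i hi
            have h2 := hb₁ i (by simp [hi])
            rw [gt_iff_lt, Fin.lt_def] at h1; omega
          subst ht₂
          have hgBx : gB = x := Fin.ext (by omega)
          subst hgBx
          have hs : ∀ i ∈ s, g.val + 1 < i.val := by
            intro i hi
            have h1 := hpb.2.2 i hi gB (by simp)
            rw [gt_iff_lt, Fin.lt_def] at h1; omega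
          have hw' : wordProdD n (((a₂ ++ [g]) ++ gB :: t) ++ (s ++ gB :: (g :: b₂))) = π := by
            rw [← hw]; simp [wordProdD_append, wordProdD_cons, mul_assoc]
          have him2 : (Finset.Icc ((gB.val : ℤ) + 1) (n : ℤ)).image (fun j => π j) =
              Finset.Icc ((gB.val : ℤ) + 1) (n : ℤ) := by
            have hgBz : (gB.val : ℤ) = (g.val : ℤ) + 1 := by exact_mod_cast hx
            ext y
            simp only [Finset.mem_image, Finset.mem_Icc, hgBz]
            constructor
            · rintro ⟨z, ⟨hz1, hz2⟩, rfl⟩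
              have hb := (him' (π z)).mp ⟨z, ⟨by omega, hz2⟩, rfl⟩
              have hne : π z ≠ (g.val : ℤ) + 1 := by
                intro hcon
                have := π.injective (hcon.trans hfix.symm)
                omega
              omega
            · rintro ⟨hy1, hy2⟩
              obtain ⟨z, ⟨hz1, hz2⟩, hzy⟩ := (him' y).mpr ⟨by omega, hy2⟩
              refine ⟨z, ⟨?_, hz2⟩, hzy⟩
              rcases eq_or_lt_of_le hz1 with heq | hlt
              · exfalso; rw [← heq, hfix] at hzy; omega
              · omega
          obtain ⟨w', hw'p, hw'l⟩ := ih gB π (a₂ ++ [g]) t s (g :: b₂)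
            (by omega) (by omega)
            (by intro i hi; rcases List.mem_append.mp hi with h | h
                · have := ha₂ i h; omega
                · simp at h; subst h; omega)
            (by intro i hi; have := ht i hi; omega)
            (by intro i hi; have := hs i hi; omega)
            (by intro i hi; rcases List.mem_cons.mp hi with rfl | h
                · omega
                · have := hb₂ i h; omega)
            hpc.2 hpb.1 hw' him2
          refine ⟨w', hw'p, ?_⟩
          have : (((a₂ ++ [g]) ++ gB :: t) ++ (s ++ gB :: (g :: b₂))).length =
              ((a₂ ++ g :: (gB :: t)) ++ ((s ++ gB :: []) ++ g :: b₂)).length := by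
            simp only [List.length_append, List.length_cons, List.length_nil]; omega
          simp only [List.length_append, List.length_cons] at hw'l this ⊢
          omega
        · -- escape via π⁻¹ : contradiction
          exfalso
          push_neg at hB
          have hb₁' : ∀ i ∈ b₁, g.val + 1 < i.val := by
            intro i hi
            have h1 := hb₁ i hi
            have h2 := hB i hi
            omega
          have hπinv : π⁻¹ = wordProdD n b₂.reverse * (genD n g * (wordProdD n b₁.reverse *
              (wordProdD n t.reverse * (genD n x * (genD n g * wordProdD n a₂.reverse))))) := by
            rw [hπ]
            simp [mul_inv_rev, genD_inv, wordProdD_reverse, wordProdD_cons, mul_assoc]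
          have hesc : π⁻¹ ((g.val : ℤ) + 2) ≤ (g.val : ℤ) := by
            rw [hπinv]
            exact escape2 g x hg hx b₂.reverse b₁.reverse t.reverse a₂.reverse
              (by intro i hi; exact hb₂ i (List.mem_reverse.mp hi))
              (by intro i hi; exact hb₁' i (List.mem_reverse.mp hi))
              (by intro i hi; exact ht i (List.mem_reverse.mp hi))
              (by intro i hi; have := ha₂ i (List.mem_reverse.mp hi); omega)
          have hxn : (g.val : ℤ) + 2 ≤ (n : ℤ) := by
            have := x.isLt; omega
          obtain ⟨z, ⟨hz1, hz2⟩, hzy⟩ := (him' ((g.val : ℤ) + 2)).mpr ⟨by omega, hxn⟩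
          have : π⁻¹ ((g.val : ℤ) + 2) = z := by rw [← hzy]; exact Equiv.symm_apply_apply π z
          omega
    · by_cases hB : ∃ i ∈ b₁, i.val = g.val + 1
      · -- escape forward : contradiction
        exfalso
        push_neg at hA
        have ha₁' : ∀ i ∈ a₁, g.val + 1 < i.val := by
          intro i hi
          have h1 := ha₁ i hi
          have h2 := hA i hi
          omega
        obtain ⟨gB, hgBm, hgB⟩ := hB
        obtain ⟨s, t₂, rfl⟩ := List.append_of_mem hgBm
        rw [List.pairwise_append] at hpb
        have ht₂ : t₂ = [] := by
          rw [List.eq_nil_iff_forall_not_mem]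
          intro i hi
          have h1 := (List.pairwise_cons.mp hpb.2.1).1 i hi
          have h2 := hb₁ i (by simp [hi])
          rw [gt_iff_lt, Fin.lt_def] at h1; omega
        subst ht₂
        have hs : ∀ i ∈ s, g.val + 1 < i.val := by
          intro i hi
          have h1 := hpb.2.2 i hi gB (by simp)
          rw [gt_iff_lt, Fin.lt_def] at h1; omega
        have hπ2 : π = wordProdD n a₂ * (genD n g * (wordProdD n a₁ * (wordProdD n s *
            (genD n gB * (genD n g * wordProdD n b₂))))) := by
          rw [← hw]; simp [wordProdD_append, wordProdD_cons, mul_assoc]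
        have hesc : π ((g.val : ℤ) + 2) ≤ (g.val : ℤ) := by
          rw [hπ2]
          exact escape2 g gB hg hgB a₂ a₁ s b₂ ha₂ ha₁' hs hb₂
        have hxn : (g.val : ℤ) + 2 ≤ (n : ℤ) := by
          have := gB.isLt; omega
        have := (him' (π ((g.val : ℤ) + 2))).mp ⟨(g.val : ℤ) + 2, ⟨by omega, hxn⟩, rfl⟩
        omega
      · -- surgery : drop the two g's
        push_neg at hA
        push_neg at hB
        have ha₁' : ∀ i ∈ a₁, g.val + 2 ≤ i.val := by
          intro i hi; have h1 := ha₁ i hi; have h2 := hA i hi; omega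
        have hb₁' : ∀ i ∈ b₁, g.val + 2 ≤ i.val := by
          intro i hi; have h1 := hb₁ i hi; have h2 := hB i hi; omega
        have hcomm : Commute (genD n g) (wordProdD n a₁ * wordProdD n b₁) :=
          (commute_genD_word g (by omega) a₁ ha₁').mul_right
            (commute_genD_word g (by omega) b₁ hb₁')
        refine ⟨a₂ ++ (a₁ ++ (b₁ ++ b₂)), ?_, by simp⟩
        have key : genD n g * (wordProdD n a₁ * (wordProdD n b₁ *
            (genD n g * wordProdD n b₂))) =
            wordProdD n a₁ * (wordProdD n b₁ * wordProdD n b₂) := by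
          calc genD n g * (wordProdD n a₁ * (wordProdD n b₁ * (genD n g * wordProdD n b₂)))
              = (genD n g * (wordProdD n a₁ * wordProdD n b₁)) * (genD n g * wordProdD n b₂) := by
                group
            _ = ((wordProdD n a₁ * wordProdD n b₁) * genD n g) * (genD n g * wordProdD n b₂) := by
                rw [hcomm.eq]
            _ = (wordProdD n a₁ * wordProdD n b₁) * ((genD n g * genD n g) * wordProdD n b₂) := by
                group
            _ = (wordProdD n a₁ * wordProdD n b₁) * wordProdD n b₂ := by
                rw [genD_mul_self, one_mul]
            _ = wordProdD n a₁ * (wordProdD n b₁ * wordProdD n b₂) := by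
                group
        rw [hπ, wordProdD_append, wordProdD_append, wordProdD_append, key]

end Aux

def ReducedD (n : ℕ) (w : List (Fin n)) : Prop :=
  ∀ w' : List (Fin n), wordProdD n w' = wordProdD n w → w.length ≤ w'.length

def IsReflectionD (n : ℕ) (t : Equiv.Perm ℤ) : Prop :=
  ∃ (v : List (Fin n)) (g : Fin n), t = wordProdD n v * genD n g * (wordProdD n v)⁻¹

def IsBooleanReflectionD (n : ℕ) (t : Equiv.Perm ℤ) : Prop :=
  IsReflectionD n t ∧
    ∃ (l : List (Fin n)) (c : Fin n), (l ++ [c]).Nodup ∧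
      ReducedD n (l ++ [c] ++ l.reverse) ∧ wordProdD n (l ++ [c] ++ l.reverse) = t

def IsBooleanD (n : ℕ) (π : Equiv.Perm ℤ) : Prop :=
  ∃ (l : List (Fin n)) (c : Fin n), (l ++ [c]).Nodup ∧
    ReducedD n (l ++ [c] ++ l.reverse) ∧
    ∃ w : List (Fin n), w.Sublist (l ++ [c] ++ l.reverse) ∧ wordProdD n w = π

def wordD (n : ℕ) : List (Fin n) :=
  List.finRange n ++ ((List.finRange n).dropLast).reverse

open Aux in
theorem stmt13 (n : ℕ) (hn : 3 ≤ n) (π : Equiv.Perm ℤ) (hbool : IsBooleanD n π)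
    (w : List (Fin n)) (hsub : w.Sublist (wordD n)) (hred : ReducedD n w)
    (hprod : wordProdD n w = π) (g : Fin n) (hg : 2 ≤ g.val) :
    (w.count g = 0 ↔
      (Finset.Icc ((g.val : ℤ) + 1) (n : ℤ)).image (fun j => π j) =
        Finset.Icc ((g.val : ℤ) + 1) (n : ℤ)) ∧
    (w.count g = 2 ↔
      (π ((g.val : ℤ) + 1) = (g.val : ℤ) + 1 ∧
        (Finset.Icc ((g.val : ℤ) + 1) (n : ℤ)).image (fun j => π j) ≠
          Finset.Icc ((g.val : ℤ) + 1) (n : ℤ))) ∧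
    (w.count g = 1 →
      (π.symm ((g.val : ℤ) + 1) < (g.val : ℤ) + 1 ∨
        π ((g.val : ℤ) + 1) < (g.val : ℤ) + 1)) := by
  clear hbool
  rw [wordD] at hsub
  obtain ⟨a, b, rfl, hsa, hsb⟩ := List.sublist_append_iff.mp hsub
  have hpa : a.Pairwise (· < ·) := (List.pairwise_lt_finRange n).sublist hsa
  have hpb : b.Pairwise (· > ·) := by
    refine List.Pairwise.sublist hsb ?_
    rw [List.pairwise_reverse]
    exact (List.pairwise_lt_finRange n).sublist (List.dropLast_sublist _)
  have hna : a.Nodup := hpa.imp ne_of_lt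
  have hnb : b.Nodup := hpb.imp ne_of_gt
  have hgn : (g.val : ℤ) + 1 ≤ (n : ℤ) := by have := g.isLt; omega
  have hgz : (2 : ℤ) ≤ (g.val : ℤ) := by exact_mod_cast hg
  have hca : a.count g = if g ∈ a then 1 else 0 := by
    split_ifs with h
    · exact List.count_eq_one_of_mem hna h
    · exact List.count_eq_zero_of_not_mem h
  have hcb : b.count g = if g ∈ b then 1 else 0 := by
    split_ifs with h
    · exact List.count_eq_one_of_mem hnb h
    · exact List.count_eq_zero_of_not_mem h
  have hcw : (a ++ b).count g = (if g ∈ a then 1 else 0) + (if g ∈ b then 1 else 0) := by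
    rw [List.count_append, hca, hcb]
  by_cases hA : g ∈ a <;> by_cases hB : g ∈ b
  · -- count 2
    obtain ⟨a₂, a₁, rfl⟩ := List.append_of_mem hA
    obtain ⟨b₁, b₂, rfl⟩ := List.append_of_mem hB
    rw [List.pairwise_append] at hpa hpb
    have hpac := List.pairwise_cons.mp hpa.2.1
    have hpbc := List.pairwise_cons.mp hpb.2.1
    have ha₂ : ∀ i ∈ a₂, i.val < g.val :=
      fun i hi => Fin.lt_def.mp (hpa.2.2 i hi g List.mem_cons_self)
    have ha₁ : ∀ i ∈ a₁, g.val < i.val := fun i hi => Fin.lt_def.mp (hpac.1 i hi)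
    have hb₁ : ∀ i ∈ b₁, g.val < i.val :=
      fun i hi => Fin.lt_def.mp (hpb.2.2 i hi g List.mem_cons_self)
    have hb₂ : ∀ i ∈ b₂, i.val < g.val := fun i hi => Fin.lt_def.mp (hpbc.1 i hi)
    have hfix : π ((g.val : ℤ) + 1) = (g.val : ℤ) + 1 := by
      rw [← hprod]
      have hform : wordProdD n ((a₂ ++ g :: a₁) ++ (b₁ ++ g :: b₂)) =
          wordProdD n a₂ * (genD n g * (wordProdD n a₁ * (wordProdD n b₁ *
            (genD n g * wordProdD n b₂)))) := by
        simp [wordProdD_append, wordProdD_cons, mul_assoc]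
      rw [hform]
      exact fix2 g hg a₂ a₁ b₁ b₂ ha₂ ha₁ hb₁ hb₂
    have hne : (Finset.Icc ((g.val : ℤ) + 1) (n : ℤ)).image (fun j => π j) ≠
        Finset.Icc ((g.val : ℤ) + 1) (n : ℤ) := by
      intro him
      obtain ⟨w', hw'p, hw'l⟩ := main2 n g π a₂ a₁ b₁ b₂ (by omega) hg ha₂ ha₁ hb₁ hb₂
        hpac.2 hpb.1 hprod him
      have := hred w' (by rw [hw'p, ← hprod])
      omega
    have hcnt : ((a₂ ++ g :: a₁) ++ (b₁ ++ g :: b₂)).count g = 2 := by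
      rw [hcw, if_pos hA, if_pos hB]
    refine ⟨?_, ?_, ?_⟩
    · rw [hcnt]
      exact iff_of_false (by omega) hne
    · rw [hcnt]
      exact iff_of_true rfl ⟨hfix, hne⟩
    · rw [hcnt]; omega
  · -- count 1 : g in a only
    obtain ⟨a₂, a₁, rfl⟩ := List.append_of_mem hA
    rw [List.pairwise_append] at hpa
    have hpac := List.pairwise_cons.mp hpa.2.1
    have ha₂ : ∀ i ∈ a₂, i.val < g.val :=
      fun i hi => Fin.lt_def.mp (hpa.2.2 i hi g List.mem_cons_self)
    have ha₁ : ∀ i ∈ a₁, g.val < i.val := fun i hi => Fin.lt_def.mp (hpac.1 i hi)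
    have hπinv : π⁻¹ = wordProdD n b.reverse * (wordProdD n a₁.reverse *
        (genD n g * wordProdD n a₂.reverse)) := by
      rw [← hprod]
      simp [wordProdD_append, wordProdD_cons, mul_inv_rev, genD_inv, wordProdD_reverse,
        mul_assoc]
    have hesc : π⁻¹ ((g.val : ℤ) + 1) ≤ (g.val : ℤ) := by
      rw [hπinv]
      refine escape1 g hg b.reverse a₁.reverse a₂.reverse ?_ ?_ ?_
      · intro i hi he
        exact hB ((Fin.ext he : i = g) ▸ List.mem_reverse.mp hi)
      · intro i hi; exact ha₁ i (List.mem_reverse.mp hi)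
      · intro i hi; exact ha₂ i (List.mem_reverse.mp hi)
    have hsymm : π.symm ((g.val : ℤ) + 1) ≤ (g.val : ℤ) := hesc
    have hnfix : π ((g.val : ℤ) + 1) ≠ (g.val : ℤ) + 1 := by
      intro h
      have h2 := Equiv.symm_apply_apply π ((g.val : ℤ) + 1)
      rw [h] at h2
      omega
    have hne : (Finset.Icc ((g.val : ℤ) + 1) (n : ℤ)).image (fun j => π j) ≠
        Finset.Icc ((g.val : ℤ) + 1) (n : ℤ) := by
      intro him
      have hmem : (g.val : ℤ) + 1 ∈ Finset.Icc ((g.val : ℤ) + 1) (n : ℤ) :=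
        Finset.mem_Icc.mpr ⟨le_refl _, hgn⟩
      rw [← him] at hmem
      obtain ⟨z, hz, hzeq⟩ := Finset.mem_image.mp hmem
      have hz' := Finset.mem_Icc.mp hz
      have : π⁻¹ ((g.val : ℤ) + 1) = z := by rw [← hzeq]; exact Equiv.symm_apply_apply π z
      omega
    have hcnt : ((a₂ ++ g :: a₁) ++ b).count g = 1 := by
      rw [hcw, if_pos hA, if_neg hB]
    refine ⟨?_, ?_, ?_⟩
    · rw [hcnt]
      exact iff_of_false (by omega) hne
    · rw [hcnt]
      exact iff_of_false (by omega) (fun hc => hnfix hc.1)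
    · intro _
      exact Or.inl (by omega)
  · -- count 1 : g in b only
    obtain ⟨b₁, b₂, rfl⟩ := List.append_of_mem hB
    rw [List.pairwise_append] at hpb
    have hpbc := List.pairwise_cons.mp hpb.2.1
    have hb₁ : ∀ i ∈ b₁, g.val < i.val :=
      fun i hi => Fin.lt_def.mp (hpb.2.2 i hi g List.mem_cons_self)
    have hb₂ : ∀ i ∈ b₂, i.val < g.val := fun i hi => Fin.lt_def.mp (hpbc.1 i hi)
    have hπ2 : π = wordProdD n a * (wordProdD n b₁ * (genD n g * wordProdD n b₂)) := by
      rw [← hprod]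
      simp [wordProdD_append, wordProdD_cons, mul_assoc]
    have hesc : π ((g.val : ℤ) + 1) ≤ (g.val : ℤ) := by
      rw [hπ2]
      refine escape1 g hg a b₁ b₂ ?_ hb₁ hb₂
      intro i hi he
      exact hA ((Fin.ext he : i = g) ▸ hi)
    have hne : (Finset.Icc ((g.val : ℤ) + 1) (n : ℤ)).image (fun j => π j) ≠
        Finset.Icc ((g.val : ℤ) + 1) (n : ℤ) := by
      intro him
      have hmem : (g.val : ℤ) + 1 ∈ Finset.Icc ((g.val : ℤ) + 1) (n : ℤ) :=
        Finset.mem_Icc.mpr ⟨le_refl _, hgn⟩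
      have : π ((g.val : ℤ) + 1) ∈ (Finset.Icc ((g.val : ℤ) + 1) (n : ℤ)).image
          (fun j => π j) := Finset.mem_image_of_mem _ hmem
      rw [him] at this
      have := (Finset.mem_Icc.mp this).1
      omega
    have hcnt : (a ++ (b₁ ++ g :: b₂)).count g = 1 := by
      rw [hcw, if_neg hA, if_pos hB]
    refine ⟨?_, ?_, ?_⟩
    · rw [hcnt]
      exact iff_of_false (by omega) hne
    · rw [hcnt]
      exact iff_of_false (by omega) (fun hc => by omega)
    · intro _
      exact Or.inr (by omega)
  · -- count 0
    have him : (Finset.Icc ((g.val : ℤ) + 1) (n : ℤ)).image (fun j => π j) =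
        Finset.Icc ((g.val : ℤ) + 1) (n : ℤ) := by
      apply Finset.eq_of_subset_of_card_le
      · intro y hy
        obtain ⟨z, hz, rfl⟩ := Finset.mem_image.mp hy
        have hz' := Finset.mem_Icc.mp hz
        have hall : ∀ i ∈ a ++ b, i.val ≠ g.val := by
          intro i hi he
          rcases List.mem_append.mp hi with h | h
          · exact hA ((Fin.ext he : i = g) ▸ h)
          · exact hB ((Fin.ext he : i = g) ▸ h)
        have := wordProdD_mem (a ++ b) g hg hall hz'.1 hz'.2
        rw [hprod] at this
        exact Finset.mem_Icc.mpr this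
      · rw [Finset.card_image_of_injective _ π.injective]
    have hcnt : (a ++ b).count g = 0 := by
      rw [hcw, if_neg hA, if_neg hB]
    refine ⟨?_, ?_, ?_⟩
    · rw [hcnt]
      exact iff_of_true rfl him
    · rw [hcnt]
      exact iff_of_false (by omega) (fun hc => hc.2 him)
    · rw [hcnt]; omega
end

section
/- Let n ≥ 2 and let W be the Coxeter group of affine type Ã_n with generators s_0, s_1, …, s_n indexed by ℤ/(n+1). Then every boolean reflection of W of length 2n+1 equals s_{i+1}·s_{i+2}·⋯·s_n·s_0·s_1·⋯·s_{i−1}·s_i·s_{i−1}·⋯·s_1·s_0·s_n·⋯·s_{i+2}·s_{i+1} for some i ∈ ℤ/(n+1) (indices taken modulo n+1). -/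
/-- The Coxeter matrix of affine type `Ã_n`, on the index set `ℤ/(n+1)`: the Coxeter graph
is a cycle on `n+1` vertices, with `M i j = 3` when `j ≡ i ± 1` and `M i j = 2` otherwise. -/
def affineAMatrix (n : ℕ) : CoxeterMatrix (ZMod (n + 1)) where
  M := fun i j => if i = j then 1 else if j = i + 1 ∨ i = j + 1 then 3 else 2
  isSymm := by
    ext i j
    show (if j = i then 1 else if i = j + 1 ∨ j = i + 1 then 3 else 2) =
         (if i = j then 1 else if j = i + 1 ∨ i = j + 1 then 3 else 2)
    rcases eq_or_ne i j with h | h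
    · subst h; rfl
    · rw [if_neg (Ne.symm h), if_neg h, if_congr or_comm rfl rfl]
  diagonal := by intro i; simp
  off_diagonal := by
    intro i j h
    show (if i = j then 1 else if j = i + 1 ∨ i = j + 1 then 3 else 2) ≠ 1
    rw [if_neg h]
    split <;> omega

/-- The canonical Coxeter system of affine type `Ã_n`. -/
def affineACoxeterSystem (n : ℕ) :
    CoxeterSystem (affineAMatrix n) (affineAMatrix n).Group :=
  (affineAMatrix n).toCoxeterSystem

/-- The word `s_{i+1} s_{i+2} ⋯ s_{i+n} s_i s_{i+n} ⋯ s_{i+2} s_{i+1}` (indices mod `n+1`),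
i.e. `s_{i+1} ⋯ s_n s_0 ⋯ s_{i-1} s_i s_{i-1} ⋯ s_0 s_n ⋯ s_{i+1}`. -/
def affineBooleanWord (n : ℕ) (i : ZMod (n + 1)) : List (ZMod (n + 1)) :=
  ((List.range n).map (fun k => i + 1 + (k : ZMod (n + 1)))) ++ [i] ++
    ((List.range n).map (fun k => i + 1 + (k : ZMod (n + 1)))).reverse

section Aux
open CoxeterSystem List

variable {n : ℕ}

private lemma natCast_zero_iff (a : ℕ) : (a : ZMod (n+1)) = 0 ↔ (n+1) ∣ a :=
  ZMod.natCast_eq_zero_iff a (n+1)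

private lemma cast_inj' {a b : ℕ} (ha : a < n + 1) (hb : b < n + 1)
    (h : (a : ZMod (n + 1)) = (b : ZMod (n + 1))) : a = b := by
  have h2 : (a : ZMod (n+1)).val = (b : ZMod (n+1)).val := by rw [h]
  rwa [ZMod.val_natCast_of_lt ha, ZMod.val_natCast_of_lt hb] at h2

private lemma add_ne_sub {a b : ℕ} (h : ¬ (n+1) ∣ (a + b)) (d : ZMod (n+1)) :
    d + (a : ZMod (n+1)) ≠ d - (b : ZMod (n+1)) := by
  intro hc
  apply h
  rw [← natCast_zero_iff]
  push_cast
  linear_combination hc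

private lemma M_two {a b : ZMod (n+1)} (h1 : a ≠ b) (h2 : b ≠ a + 1) (h3 : a ≠ b + 1) :
    (affineAMatrix n).M a b = 2 := by
  show (if a = b then 1 else if b = a + 1 ∨ a = b + 1 then 3 else 2) = 2
  rw [if_neg h1, if_neg (by tauto)]

private lemma simple_comm {a b : ZMod (n+1)} (h : (affineAMatrix n).M a b = 2) :
    Commute ((affineACoxeterSystem n).simple a) ((affineACoxeterSystem n).simple b) := by
  have hp := (affineACoxeterSystem n).simple_mul_simple_pow a b
  rw [h] at hp
  have h2 : ((affineACoxeterSystem n).simple a * (affineACoxeterSystem n).simple b) *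
      ((affineACoxeterSystem n).simple a * (affineACoxeterSystem n).simple b) = 1 := by
    rw [← sq]; exact hp
  have h3 := eq_inv_of_mul_eq_one_left h2
  rw [mul_inv_rev, inv_simple, inv_simple] at h3
  exact h3

private lemma oneNeZeroZ (hn : 2 ≤ n) : (1 : ZMod (n+1)) ≠ 0 := by
  have h : ((1:ℕ) : ZMod (n+1)) ≠ 0 := by
    rw [Ne, natCast_zero_iff]
    intro hd; have := Nat.le_of_dvd one_pos hd; omega
  simpa using h

private lemma braid_of_pow3 {G : Type*} [Group G] {x y : G} (hx : x*x = 1) (hy : y*y = 1)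
    (h : (x*y)^3 = 1) : x*y*x = y*x*y := by
  have h1 : x*y*x*(y*x*y) = 1 := by
    calc x*y*x*(y*x*y) = (x*y)^3 := by
          rw [pow_succ, pow_succ, pow_one]; group
    _ = 1 := h
  have h2 := eq_inv_of_mul_eq_one_left h1
  rw [h2, mul_inv_rev, mul_inv_rev, inv_eq_of_mul_eq_one_right hx,
    inv_eq_of_mul_eq_one_right hy, mul_assoc]

private lemma simple_braid (hn : 2 ≤ n) (a : ZMod (n+1)) :
    (affineACoxeterSystem n).simple a * (affineACoxeterSystem n).simple (a+1) *
      (affineACoxeterSystem n).simple a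
    = (affineACoxeterSystem n).simple (a+1) * (affineACoxeterSystem n).simple a *
      (affineACoxeterSystem n).simple (a+1) := by
  have hM : (affineAMatrix n).M a (a+1) = 3 := by
    show (if a = a+1 then 1 else if a+1 = a+1 ∨ a = (a+1)+1 then 3 else 2) = 3
    rw [if_neg ?_, if_pos (Or.inl rfl)]
    intro hcon
    exact oneNeZeroZ hn (by linear_combination -hcon)
  have hp := (affineACoxeterSystem n).simple_mul_simple_pow a (a+1)
  rw [hM] at hp
  exact braid_of_pow3 ((affineACoxeterSystem n).simple_mul_simple_self a)
    ((affineACoxeterSystem n).simple_mul_simple_self (a+1)) hp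

end Aux

section Aux2
open CoxeterSystem List

variable {n : ℕ}

def Lb (n : ℕ) (d : ZMod (n+1)) : ℕ → (affineAMatrix n).Group
  | 0 => 1
  | (k+1) => (affineACoxeterSystem n).simple (d - ((k+1 : ℕ) : ZMod (n+1))) * Lb n d k

def FF (n : ℕ) (d : ZMod (n+1)) (k : ℕ) : (affineAMatrix n).Group :=
  Lb n d k * (affineACoxeterSystem n).simple d * (Lb n d k)⁻¹

private lemma Lb_succ_right (d : ZMod (n+1)) (m : ℕ) :
    Lb n d (m+1) = Lb n (d-1) m * (affineACoxeterSystem n).simple (d-1) := by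
  induction m generalizing d with
  | zero => simp [Lb]
  | succ m ih =>
    have hidx : d - ((m+1+1:ℕ) : ZMod (n+1)) = (d-1) - ((m+1:ℕ) : ZMod (n+1)) := by
      push_cast; ring
    calc Lb n d (m+1+1) = (affineACoxeterSystem n).simple (d - ((m+1+1:ℕ) : ZMod (n+1)))
          * Lb n d (m+1) := rfl
    _ = (affineACoxeterSystem n).simple ((d-1) - ((m+1:ℕ) : ZMod (n+1)))
          * (Lb n (d-1) m * (affineACoxeterSystem n).simple (d-1)) := by rw [hidx, ih]
    _ = Lb n (d-1) (m+1) * (affineACoxeterSystem n).simple (d-1) := by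
        rw [show Lb n (d-1) (m+1) = (affineACoxeterSystem n).simple
          ((d-1) - ((m+1:ℕ) : ZMod (n+1))) * Lb n (d-1) m from rfl, mul_assoc]

private lemma comm_Lb (hn : 2 ≤ n) (d : ZMod (n+1)) {k : ℕ} (hk : k ≤ n - 2) :
    Commute ((affineACoxeterSystem n).simple (d+1)) (Lb n d k) := by
  induction k with
  | zero => exact Commute.one_right _
  | succ k ih =>
    have h1 : Commute ((affineACoxeterSystem n).simple (d+1))
        ((affineACoxeterSystem n).simple (d - ((k+1:ℕ) : ZMod (n+1)))) := by
      apply simple_comm; apply M_two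
      · have h := add_ne_sub (a := 1) (b := k+1)
          (by intro hd; have := Nat.le_of_dvd (by omega) hd; omega) d
        simpa using h
      · have h := add_ne_sub (a := 2) (b := k+1)
          (by intro hd; have := Nat.le_of_dvd (by omega) hd; omega) d
        intro hc; apply h; push_cast at hc ⊢; linear_combination -hc
      · have h := add_ne_sub (a := 1) (b := k)
          (by intro hd; have := Nat.le_of_dvd (by omega) hd; omega) d
        intro hc; apply h; push_cast at hc ⊢; linear_combination hc
    exact h1.mul_right (ih (by omega))

private lemma R_step (hn : 2 ≤ n) (d : ZMod (n+1)) {k : ℕ} (hk : k ≤ n - 2) :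
    (affineACoxeterSystem n).simple (d+1) * FF n d k * (affineACoxeterSystem n).simple (d+1)
      = FF n (d+1) (k+1) := by
  set s1 := (affineACoxeterSystem n).simple (d+1) with hs1
  set sd := (affineACoxeterSystem n).simple d with hsd
  set L := Lb n d k with hLdef
  have hcomm : Commute s1 L := comm_Lb hn d hk
  have hL : Lb n (d+1) (k+1) = L * sd := by
    rw [Lb_succ_right, add_sub_cancel_right, hLdef, hsd]
  rw [FF, FF, hL]
  have hb : sd * s1 * sd = s1 * sd * s1 := by
    rw [hs1, hsd]; exact simple_braid hn d
  have h := hcomm.eq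
  have h' := hcomm.inv_right.eq
  calc s1 * (L * sd * L⁻¹) * s1 = (s1 * L) * sd * (L⁻¹ * s1) := by group
  _ = (L * s1) * sd * (s1 * L⁻¹) := by rw [h, ← h']
  _ = L * (s1 * sd * s1) * L⁻¹ := by group
  _ = L * (sd * s1 * sd) * L⁻¹ := by rw [hb]
  _ = L * sd * s1 * (L * sd)⁻¹ := by
      rw [mul_inv_rev, hsd, inv_simple, ← hsd]; group

private lemma Lb_eq_word (d : ZMod (n+1)) (m : ℕ) :
    Lb n d m = (affineACoxeterSystem n).wordProd
      ((List.range m).map (fun jj : ℕ => d - (m : ZMod (n+1)) + (jj : ZMod (n+1)))) := by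
  induction m generalizing d with
  | zero => simp [Lb]
  | succ m ih =>
    rw [List.range_succ_eq_map, List.map_cons, List.map_map, wordProd_cons]
    have h0 : d - ((m+1:ℕ) : ZMod (n+1)) + ((0:ℕ) : ZMod (n+1)) = d - ((m+1:ℕ) : ZMod (n+1)) := by
      push_cast; ring
    have hfun : ((fun jj : ℕ => d - ((m+1:ℕ) : ZMod (n+1)) + (jj : ZMod (n+1))) ∘ Nat.succ)
        = (fun jj : ℕ => d - ((m:ℕ) : ZMod (n+1)) + (jj : ZMod (n+1))) := by
      funext jj; simp only [Function.comp]; push_cast; ring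
    rw [h0, hfun, ← ih]
    rfl

end Aux2

section Aux3
open CoxeterSystem List

variable {n : ℕ}

private lemma comm_wordProd {j : ZMod (n+1)} {u : List (ZMod (n+1))}
    (h : ∀ y ∈ u, Commute ((affineACoxeterSystem n).simple j) ((affineACoxeterSystem n).simple y)) :
    Commute ((affineACoxeterSystem n).simple j) ((affineACoxeterSystem n).wordProd u) := by
  induction u with
  | nil => rw [wordProd_nil]; exact Commute.one_right _
  | cons a u ih =>
    rw [wordProd_cons]
    exact (h a (List.mem_cons_self)).mul_right (ih (fun y hy => h y (List.mem_cons_of_mem a hy)))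

private lemma shorten (c j : ZMod (n+1)) (l l₁ u : List (ZMod (n+1)))
    (hsplit : l = l₁ ++ j :: u) (hl : l.length = n)
    (hlen : (affineACoxeterSystem n).length
      ((affineACoxeterSystem n).wordProd (l ++ [c] ++ l.reverse)) = 2*n+1)
    (hcomm : ∀ y : ZMod (n+1), (y ∈ u ∨ y = c) →
      Commute ((affineACoxeterSystem n).simple j) ((affineACoxeterSystem n).simple y)) : False := by
  have hcu : Commute ((affineACoxeterSystem n).simple j) ((affineACoxeterSystem n).wordProd u) :=
    comm_wordProd (fun y hy => hcomm y (Or.inl hy))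
  have hcc : Commute ((affineACoxeterSystem n).simple j) ((affineACoxeterSystem n).simple c) :=
    hcomm c (Or.inr rfl)
  have hinner : Commute ((affineACoxeterSystem n).simple j)
      ((affineACoxeterSystem n).wordProd u * (affineACoxeterSystem n).simple c *
        ((affineACoxeterSystem n).wordProd u)⁻¹) :=
    (hcu.mul_right hcc).mul_right hcu.inv_right
  have key : (affineACoxeterSystem n).simple j *
      ((affineACoxeterSystem n).wordProd u * (affineACoxeterSystem n).simple c *
        ((affineACoxeterSystem n).wordProd u)⁻¹) * (affineACoxeterSystem n).simple j
      = (affineACoxeterSystem n).wordProd u * (affineACoxeterSystem n).simple c *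
        ((affineACoxeterSystem n).wordProd u)⁻¹ := by
    rw [hinner.eq, mul_assoc, simple_mul_simple_self, mul_one]
  have e1 : (affineACoxeterSystem n).wordProd (l ++ [c] ++ l.reverse)
      = ((affineACoxeterSystem n).wordProd l₁ * ((affineACoxeterSystem n).simple j *
          (affineACoxeterSystem n).wordProd u)) * (affineACoxeterSystem n).simple c *
        ((affineACoxeterSystem n).wordProd l₁ * ((affineACoxeterSystem n).simple j *
          (affineACoxeterSystem n).wordProd u))⁻¹ := by
    rw [hsplit]
    simp only [wordProd_append, wordProd_cons, wordProd_nil, wordProd_reverse, mul_one]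
  have e2 : (affineACoxeterSystem n).wordProd ((l₁ ++ u) ++ [c] ++ (l₁ ++ u).reverse)
      = ((affineACoxeterSystem n).wordProd l₁ * (affineACoxeterSystem n).wordProd u) *
          (affineACoxeterSystem n).simple c *
        ((affineACoxeterSystem n).wordProd l₁ * (affineACoxeterSystem n).wordProd u)⁻¹ := by
    simp only [wordProd_append, wordProd_cons, wordProd_nil, wordProd_reverse, mul_one]
  have ht : (affineACoxeterSystem n).wordProd (l ++ [c] ++ l.reverse)
      = (affineACoxeterSystem n).wordProd ((l₁ ++ u) ++ [c] ++ (l₁ ++ u).reverse) := by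
    rw [e1, e2]
    calc ((affineACoxeterSystem n).wordProd l₁ * ((affineACoxeterSystem n).simple j *
          (affineACoxeterSystem n).wordProd u)) * (affineACoxeterSystem n).simple c *
        ((affineACoxeterSystem n).wordProd l₁ * ((affineACoxeterSystem n).simple j *
          (affineACoxeterSystem n).wordProd u))⁻¹
        = (affineACoxeterSystem n).wordProd l₁ * ((affineACoxeterSystem n).simple j *
            ((affineACoxeterSystem n).wordProd u * (affineACoxeterSystem n).simple c *
              ((affineACoxeterSystem n).wordProd u)⁻¹) * ((affineACoxeterSystem n).simple j)⁻¹) *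
            ((affineACoxeterSystem n).wordProd l₁)⁻¹ := by group
    _ = (affineACoxeterSystem n).wordProd l₁ * ((affineACoxeterSystem n).simple j *
            ((affineACoxeterSystem n).wordProd u * (affineACoxeterSystem n).simple c *
              ((affineACoxeterSystem n).wordProd u)⁻¹) * (affineACoxeterSystem n).simple j) *
            ((affineACoxeterSystem n).wordProd l₁)⁻¹ := by rw [inv_simple]
    _ = (affineACoxeterSystem n).wordProd l₁ *
            ((affineACoxeterSystem n).wordProd u * (affineACoxeterSystem n).simple c *
              ((affineACoxeterSystem n).wordProd u)⁻¹) *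
            ((affineACoxeterSystem n).wordProd l₁)⁻¹ := by rw [key]
    _ = ((affineACoxeterSystem n).wordProd l₁ * (affineACoxeterSystem n).wordProd u) *
          (affineACoxeterSystem n).simple c *
        ((affineACoxeterSystem n).wordProd l₁ * (affineACoxeterSystem n).wordProd u)⁻¹ := by group
  have hle := (affineACoxeterSystem n).length_wordProd_le ((l₁ ++ u) ++ [c] ++ (l₁ ++ u).reverse)
  rw [← ht, hlen] at hle
  have hlength : l₁.length + u.length + 1 = n := by
    have h2 := congrArg List.length hsplit
    simp at h2
    omega
  simp only [List.length_append, List.length_reverse, List.length_cons, List.length_nil] at hle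
  omega

end Aux3

section Aux4
open CoxeterSystem List

variable {n : ℕ}

private lemma main_ind (hn : 2 ≤ n) (c : ZMod (n+1)) (l : List (ZMod (n+1)))
    (hnd : (l ++ [c]).Nodup) (hl : l.length = n)
    (hlen : (affineACoxeterSystem n).length
      ((affineACoxeterSystem n).wordProd (l ++ [c] ++ l.reverse)) = 2*n+1) :
    ∀ (u l₁ : List (ZMod (n+1))), l = l₁ ++ u → u.length ≤ n - 1 →
      ∃ p q : ℕ, p + q = u.length ∧
        (∀ x : ZMod (n+1), (x ∈ u ∨ x = c) ↔
          ∃ m : ℕ, m ≤ p + q ∧ x = c - (p : ZMod (n+1)) + (m : ZMod (n+1))) ∧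
        (affineACoxeterSystem n).wordProd u * (affineACoxeterSystem n).simple c *
          ((affineACoxeterSystem n).wordProd u)⁻¹
          = FF n (c + (q : ZMod (n+1))) (p + q) := by
  intro u
  induction u with
  | nil =>
    intro l₁ _ _
    refine ⟨0, 0, rfl, ?_, ?_⟩
    · intro x
      constructor
      · rintro (h | rfl)
        · simp at h
        · exact ⟨0, le_refl 0, by push_cast; ring⟩
      · rintro ⟨m, hm, rfl⟩
        right
        have hm0 : m = 0 := Nat.le_zero.mp hm
        subst hm0; push_cast; ring
    · simp only [wordProd_nil, one_mul, inv_one, mul_one]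
      rw [FF]
      norm_num [Lb]
  | cons j u ih =>
    intro l₁ hsplit hul
    have hsplit' : l = (l₁ ++ [j]) ++ u := by rw [hsplit]; simp
    have hul2 : u.length + 1 ≤ n - 1 := by simpa using hul
    obtain ⟨p, q, hpq, hset, hval⟩ := ih (l₁ ++ [j]) hsplit' (by omega)
    have hpq2 : p + q ≤ n - 2 := by omega
    -- nodup facts
    have hlnd : l.Nodup := (List.nodup_append'.mp hnd).1
    have hcl : c ∉ l := by
      have hd := (List.nodup_append'.mp hnd).2.2
      intro hcl
      exact hd hcl (List.mem_singleton.mpr rfl)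
    have hjl : j ∈ l := by rw [hsplit]; simp
    have hjc : j ≠ c := fun h => hcl (h ▸ hjl)
    have hju : j ∉ u := by
      have h2 : (j :: u).Nodup := by
        have h3 := hlnd
        rw [hsplit] at h3
        exact (List.nodup_append'.mp h3).2.1
      exact (List.nodup_cons.mp h2).1
    -- adjacency of j to the current interval
    have hnc : ¬ ∀ y : ZMod (n+1), (y ∈ u ∨ y = c) →
        Commute ((affineACoxeterSystem n).simple j) ((affineACoxeterSystem n).simple y) :=
      fun h => shorten c j l l₁ u hsplit hl hlen h
    push_neg at hnc
    obtain ⟨y, hy, hyc⟩ := hnc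
    have hadj : y = j + 1 ∨ j = y + 1 := by
      by_contra hcon
      push_neg at hcon
      apply hyc
      apply simple_comm
      apply M_two ?_ hcon.1 hcon.2
      intro hje
      rcases hy with h | h
      · exact hju (hje ▸ h)
      · exact hjc (hje.trans h)
    obtain ⟨m, hm, hym⟩ := (hset y).mp hy
    have hnotin : ∀ m' : ℕ, m' ≤ p + q → j ≠ c - (p:ZMod (n+1)) + (m' : ZMod (n+1)) := by
      intro m' hm' hjm
      rcases (hset j).mpr ⟨m', hm', hjm⟩ with h | h
      · exact hju h
      · exact hjc h
    rcases hadj with hcase | hcase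
    · -- y = j + 1 : j is on the left of the interval
      have hjy : j = c - (p:ZMod (n+1)) + (m:ZMod (n+1)) - 1 := by
        linear_combination hym - hcase
      rcases Nat.eq_zero_or_pos m with hm0 | hmpos
      · -- L-branch : j = c - (p+1)
        subst hm0
        have hj : j = c - ((p+1 : ℕ) : ZMod (n+1)) := by
          push_cast
          push_cast at hjy
          linear_combination hjy
        refine ⟨p+1, q, by simp [← hpq]; omega, ?_, ?_⟩
        · intro x
          constructor
          · intro hx
            rcases hx with hx | hx
            · rcases List.mem_cons.mp hx with rfl | hx
              · exact ⟨0, by omega, by rw [hj]; push_cast; ring⟩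
              · obtain ⟨m', hm', hx'⟩ := (hset x).mp (Or.inl hx)
                exact ⟨m'+1, by omega, by push_cast at hx' ⊢; linear_combination hx'⟩
            · obtain ⟨m', hm', hx'⟩ := (hset x).mp (Or.inr hx)
              exact ⟨m'+1, by omega, by push_cast at hx' ⊢; linear_combination hx'⟩
          · rintro ⟨m', hm', hx⟩
            match m', hx with
            | 0, hx =>
              left
              have : x = j := by rw [hj]; push_cast at hx ⊢; linear_combination hx
              rw [this]; exact List.mem_cons_self
            | (m''+1), hx =>
              have hx' : x = c - (p : ZMod (n+1)) + (m'' : ZMod (n+1)) := by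
                push_cast at hx ⊢; linear_combination hx
              rcases (hset x).mpr ⟨m'', by omega, hx'⟩ with h | h
              · exact Or.inl (List.mem_cons_of_mem _ h)
              · exact Or.inr h
        · -- value
          have harith : (p+1)+q = (p+q)+1 := by omega
          rw [harith, FF]
          have hLb : Lb n (c+(q:ZMod (n+1))) ((p+q)+1)
              = (affineACoxeterSystem n).simple j * Lb n (c+(q:ZMod (n+1))) (p+q) := by
            rw [show Lb n (c+(q:ZMod (n+1))) ((p+q)+1)
              = (affineACoxeterSystem n).simple ((c+(q:ZMod (n+1))) - ((p+q+1:ℕ) : ZMod (n+1)))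
                * Lb n (c+(q:ZMod (n+1))) (p+q) from rfl]
            congr 2
            rw [hj]; push_cast; ring
          rw [hLb, wordProd_cons]
          rw [FF] at hval
          calc ((affineACoxeterSystem n).simple j * (affineACoxeterSystem n).wordProd u) *
                (affineACoxeterSystem n).simple c *
                ((affineACoxeterSystem n).simple j * (affineACoxeterSystem n).wordProd u)⁻¹
              = (affineACoxeterSystem n).simple j *
                  ((affineACoxeterSystem n).wordProd u * (affineACoxeterSystem n).simple c *
                    ((affineACoxeterSystem n).wordProd u)⁻¹) *
                  ((affineACoxeterSystem n).simple j)⁻¹ := by group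
          _ = (affineACoxeterSystem n).simple j *
                (Lb n (c+(q:ZMod (n+1))) (p+q) * (affineACoxeterSystem n).simple (c+(q:ZMod (n+1))) *
                  (Lb n (c+(q:ZMod (n+1))) (p+q))⁻¹) *
                ((affineACoxeterSystem n).simple j)⁻¹ := by rw [hval]
          _ = ((affineACoxeterSystem n).simple j * Lb n (c+(q:ZMod (n+1))) (p+q)) *
                (affineACoxeterSystem n).simple (c+(q:ZMod (n+1))) *
                ((affineACoxeterSystem n).simple j * Lb n (c+(q:ZMod (n+1))) (p+q))⁻¹ := by group
      · -- m ≥ 1 : contradiction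
        exfalso
        have hx' : j = c - (p : ZMod (n+1)) + ((m-1 : ℕ) : ZMod (n+1)) := by
          push_cast [Nat.cast_sub hmpos]
          linear_combination hjy
        exact hnotin (m-1) (by omega) hx'
    · -- j = y + 1 : j is on the right of the interval
      rcases Nat.lt_or_ge m (p+q) with hmlt | hmge
      · exfalso
        have hx' : j = c - (p : ZMod (n+1)) + ((m+1 : ℕ) : ZMod (n+1)) := by
          push_cast
          linear_combination hcase + hym
        exact hnotin (m+1) (by omega) hx'
      · have hmeq : m = p + q := by omega
        subst hmeq
        have hj : j = c + ((q+1 : ℕ) : ZMod (n+1)) := by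
          push_cast
          push_cast at hym
          linear_combination hcase + hym
        refine ⟨p, q+1, by simp [← hpq]; omega, ?_, ?_⟩
        · intro x
          constructor
          · intro hx
            rcases hx with hx | hx
            · rcases List.mem_cons.mp hx with rfl | hx
              · exact ⟨p+q+1, by omega, by rw [hj]; push_cast; ring⟩
              · obtain ⟨m', hm', hx'⟩ := (hset x).mp (Or.inl hx)
                exact ⟨m', by omega, hx'⟩
            · obtain ⟨m', hm', hx'⟩ := (hset x).mp (Or.inr hx)
              exact ⟨m', by omega, hx'⟩
          · rintro ⟨m', hm', hx⟩
            rcases Nat.lt_or_ge m' (p+q+1) with hlt | hge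
            · rcases (hset x).mpr ⟨m', by omega, hx⟩ with h | h
              · exact Or.inl (List.mem_cons_of_mem _ h)
              · exact Or.inr h
            · have hm'eq : m' = p+q+1 := by omega
              subst hm'eq
              left
              have : x = j := by rw [hj]; push_cast at hx ⊢; linear_combination hx
              rw [this]; exact List.mem_cons_self
        · -- value via R_step
          have hd : c + ((q+1:ℕ):ZMod (n+1)) = (c + ((q:ℕ):ZMod (n+1))) + 1 := by push_cast; ring
          have harith : p+(q+1) = (p+q)+1 := by omega
          rw [hd, harith, ← R_step hn (c+((q:ℕ):ZMod (n+1))) hpq2, wordProd_cons]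
          have hj' : j = (c+((q:ℕ):ZMod (n+1))) + 1 := by rw [hj]; push_cast; ring
          rw [← hj', ← hval]
          calc ((affineACoxeterSystem n).simple j * (affineACoxeterSystem n).wordProd u) *
              (affineACoxeterSystem n).simple c *
              ((affineACoxeterSystem n).simple j * (affineACoxeterSystem n).wordProd u)⁻¹
              = (affineACoxeterSystem n).simple j *
                ((affineACoxeterSystem n).wordProd u * (affineACoxeterSystem n).simple c *
                  ((affineACoxeterSystem n).wordProd u)⁻¹) *
                ((affineACoxeterSystem n).simple j)⁻¹ := by group
          _ = (affineACoxeterSystem n).simple j *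
                ((affineACoxeterSystem n).wordProd u * (affineACoxeterSystem n).simple c *
                  ((affineACoxeterSystem n).wordProd u)⁻¹) *
                (affineACoxeterSystem n).simple j := by rw [inv_simple]

end Aux4

section Aux5
open CoxeterSystem List

variable {n : ℕ}

private lemma abw_list (i : ZMod (n+1)) :
    (List.range n).map (fun k => i + 1 + (k : ZMod (n + 1)))
      = List.map (fun k : ℕ => i + 1 + ((k:ℕ) : ZMod (n + 1))) (List.range n) := by
  simp only [bind_pure_comp, Functor.map, List.map_map]
  rfl

private lemma abw_eval (hn : 2 ≤ n) (i : ZMod (n+1)) :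
    (affineACoxeterSystem n).wordProd (affineBooleanWord n i)
      = (affineACoxeterSystem n).simple (i+1) * FF n i (n-1) *
        (affineACoxeterSystem n).simple (i+1) := by
  have h0 : ((n:ℕ) : ZMod (n+1)) + 1 = 0 := by
    have h1 := ZMod.natCast_self (n+1)
    push_cast at h1
    linear_combination h1
  have hL : List.map (fun k : ℕ => i + 1 + ((k:ℕ) : ZMod (n + 1))) (List.range n)
      = (i+1) :: (List.range (n-1)).map
          (fun jj : ℕ => i - ((n-1 : ℕ) : ZMod (n+1)) + (jj : ZMod (n+1))) := by
    rw [show List.range n = List.range ((n-1)+1) by congr 1; omega]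
    rw [List.range_succ_eq_map, List.map_cons, List.map_map]
    congr 1
    · norm_num
    · congr 1
      funext jj
      simp only [Function.comp]
      push_cast [Nat.cast_sub (show 1 ≤ n by omega)]
      linear_combination h0
  rw [affineBooleanWord, abw_list, wordProd_append, wordProd_append, wordProd_reverse,
    wordProd_cons, wordProd_nil, hL, wordProd_cons, ← Lb_eq_word, FF]
  calc ((affineACoxeterSystem n).simple (i+1) * Lb n i (n-1)) *
        ((affineACoxeterSystem n).simple i * 1) *
        ((affineACoxeterSystem n).simple (i+1) * Lb n i (n-1))⁻¹
      = (affineACoxeterSystem n).simple (i+1) *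
          (Lb n i (n-1) * (affineACoxeterSystem n).simple i * (Lb n i (n-1))⁻¹) *
          ((affineACoxeterSystem n).simple (i+1))⁻¹ := by group
  _ = (affineACoxeterSystem n).simple (i+1) *
        (Lb n i (n-1) * (affineACoxeterSystem n).simple i * (Lb n i (n-1))⁻¹) *
        (affineACoxeterSystem n).simple (i+1) := by rw [inv_simple]

end Aux5


theorem stmt14 (n : ℕ) (hn : 2 ≤ n) (t : (affineAMatrix n).Group)
    (hrefl : (affineACoxeterSystem n).IsReflection t)
    (hbool : ∃ (l : List (ZMod (n + 1))) (c : ZMod (n + 1)), (l ++ [c]).Nodup ∧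
      (affineACoxeterSystem n).IsReduced (l ++ [c] ++ l.reverse) ∧
      (affineACoxeterSystem n).wordProd (l ++ [c] ++ l.reverse) = t)
    (hlen : (affineACoxeterSystem n).length t = 2 * n + 1) :
    ∃ i : ZMod (n + 1), t = (affineACoxeterSystem n).wordProd (affineBooleanWord n i) := by
  classical
  open CoxeterSystem in
  obtain ⟨l, c, hnd, hred, hprod⟩ := hbool
  have hlen' : (affineACoxeterSystem n).length
      ((affineACoxeterSystem n).wordProd (l ++ [c] ++ l.reverse)) = 2*n+1 := by
    rw [hprod]; exact hlen
  have hlow := (affineACoxeterSystem n).length_wordProd_le (l ++ [c] ++ l.reverse)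
  rw [hlen'] at hlow
  have hcardle : (l ++ [c]).length ≤ Fintype.card (ZMod (n+1)) := List.Nodup.length_le_card hnd
  rw [ZMod.card] at hcardle
  have hl : l.length = n := by
    simp only [List.length_append, List.length_reverse, List.length_cons,
      List.length_nil] at hlow hcardle
    omega
  rcases l with _ | ⟨j, u⟩
  · simp at hl; omega
  · have hul : u.length + 1 = n := by simpa using hl
    obtain ⟨p, q, hpq, hset, hval⟩ :=
      main_ind hn c (j :: u) hnd hl hlen' u [j] rfl (by omega)
    have hpq' : p + q = n - 1 := by omega
    -- the missing vertex is c + (q+1)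
    have hx0not : ¬ ((c + ((q+1:ℕ) : ZMod (n+1))) ∈ u ∨ (c + ((q+1:ℕ) : ZMod (n+1))) = c) := by
      intro hx0
      obtain ⟨m, hmle, hx⟩ := (hset _).mp hx0
      have he : ((p+q+1 : ℕ) : ZMod (n+1)) = ((m : ℕ) : ZMod (n+1)) := by
        push_cast at hx ⊢; linear_combination hx
      have := cast_inj' (by omega) (by omega) he
      omega
    have hcover : ∀ x : ZMod (n+1), x ∈ (j::u) ++ [c] := by
      have hcard : ((j::u) ++ [c]).toFinset = Finset.univ := by
        apply Finset.eq_univ_of_card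
        rw [List.toFinset_card_of_nodup hnd]
        simp only [List.length_append, List.length_cons, List.length_nil]
        rw [ZMod.card]
        omega
      intro x
      rw [← List.mem_toFinset, hcard]
      exact Finset.mem_univ x
    have hx0j : c + ((q+1:ℕ) : ZMod (n+1)) = j := by
      rcases List.mem_append.mp (hcover (c + ((q+1:ℕ) : ZMod (n+1)))) with h | h
      · rcases List.mem_cons.mp h with h | h
        · exact h
        · exact absurd (Or.inl h) hx0not
      · exact absurd (Or.inr (List.mem_singleton.mp h)) hx0not
    refine ⟨c + ((q:ℕ) : ZMod (n+1)), ?_⟩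
    rw [abw_eval hn]
    have hji : j = (c + ((q:ℕ) : ZMod (n+1))) + 1 := by
      rw [← hx0j]; push_cast; ring
    rw [← hprod]
    simp only [wordProd_append, wordProd_cons, wordProd_nil, wordProd_reverse, mul_one]
    calc ((affineACoxeterSystem n).simple j * (affineACoxeterSystem n).wordProd u) *
          (affineACoxeterSystem n).simple c *
          ((affineACoxeterSystem n).simple j * (affineACoxeterSystem n).wordProd u)⁻¹
        = (affineACoxeterSystem n).simple j *
            ((affineACoxeterSystem n).wordProd u * (affineACoxeterSystem n).simple c *
              ((affineACoxeterSystem n).wordProd u)⁻¹) *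
            ((affineACoxeterSystem n).simple j)⁻¹ := by group
    _ = (affineACoxeterSystem n).simple j * FF n (c + ((q:ℕ) : ZMod (n+1))) (p+q) *
          (affineACoxeterSystem n).simple j := by rw [hval, CoxeterSystem.inv_simple]
    _ = (affineACoxeterSystem n).simple ((c + ((q:ℕ) : ZMod (n+1))) + 1) *
          FF n (c + ((q:ℕ) : ZMod (n+1))) (n-1) *
          (affineACoxeterSystem n).simple ((c + ((q:ℕ) : ZMod (n+1))) + 1) := by
        rw [← hji, hpq']
end
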